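/- arXiv:1611.00934 — 2 statements merged into one kernel-verified Lean document; each statement's English description precedes it below -/
import Mathlib

section
/- For every integer k ≥ 5 and every deterministic online strategy A for exploring the ladder grid G_{2,4}, there exists a weighting w of G_{2,4} with weights in {1,k} such that OPT(w) = 8 and the cost of the exploration walk A(w) is at least 10; in particular, cost(A(w)) ≥ (5/4)·OPT(w), so no deterministic online strategy is strictly r-competitive for any r < 5/4 on G_{2,4}. -/
/-- Vertices are pairs of naturals (row, column). -/
abbrev V : Type := ℕ × ℕ

/-- Membership in the ladder grid `G_{2,n}`: row 1 or 2, column between 1 and n. -/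
def InLadder (n : ℕ) (v : V) : Prop :=
  (v.1 = 1 ∨ v.1 = 2) ∧ 1 ≤ v.2 ∧ v.2 ≤ n

/-- Adjacency in the ladder grid `G_{2,n}`: both endpoints in the grid and
L1-distance exactly 1. -/
def LadderAdj (n : ℕ) (u v : V) : Prop :=
  InLadder n u ∧ InLadder n v ∧
    ((u.1 = v.1 ∧ (u.2 + 1 = v.2 ∨ v.2 + 1 = u.2)) ∨
     (u.2 = v.2 ∧ (u.1 + 1 = v.1 ∨ v.1 + 1 = u.1)))

/-- A weighting of `G_{2,n}` with weights in `{1, k}`, given as a symmetric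
function on pairs of vertices. -/
def IsWeighting (n k : ℕ) (w : V → V → ℕ) : Prop :=
  (∀ u v, w u v = w v u) ∧ (∀ u v, LadderAdj n u v → w u v = 1 ∨ w u v = k)

/-- The cost of a walk (a list of vertices): sum of the weights of the traversed
edges, with multiplicity. -/
def walkCost (w : V → V → ℕ) (p : List V) : ℕ :=
  ((p.zip p.tail).map fun e => w e.1 e.2).sum

/-- A walk in `G_{2,n}` starting at `s`. -/
def IsWalkFrom (n : ℕ) (s : V) (p : List V) : Prop :=
  p.head? = some s ∧ p.Chain' (LadderAdj n)

/-- An exploration walk: a walk starting at `(1,1)` visiting every vertex of the ladder. -/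
def IsExploration (n : ℕ) (p : List V) : Prop :=
  IsWalkFrom n (1, 1) p ∧ ∀ v, InLadder n v → v ∈ p

/-- `OPT`: the minimum cost of an exploration walk of `G_{2,n}` under the weighting `w`. -/
noncomputable def OPT (n : ℕ) (w : V → V → ℕ) : ℕ :=
  sInf {c | ∃ p, IsExploration n p ∧ walkCost w p = c}

/-- A deterministic online strategy for exploring `G_{2,n}` with weights in `{1,k}`:
it outputs an exploration walk for every weighting, and if two weightings agree on
all edges incident to the first `t+1` visited vertices, then the first `t+2`
vertices of the corresponding walks coincide. -/
def OnlineStrategy (n k : ℕ) (A : (V → V → ℕ) → List V) : Prop :=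
  (∀ w, IsWeighting n k w → IsExploration n (A w)) ∧
  (∀ w w', IsWeighting n k w → IsWeighting n k w' → ∀ t : ℕ,
    (∀ u v, LadderAdj n u v →
      (u ∈ (A w).take (t + 1) ∨ v ∈ (A w).take (t + 1)) → w u v = w' u v) →
    (A w).take (t + 2) = (A w').take (t + 2))


/-! ### Auxiliary machinery for the lower-bound proof. -/

set_option maxRecDepth 100000
set_option maxHeartbeats 2000000

instance instDecInLadder (n : ℕ) (v : V) : Decidable (InLadder n v) :=
  inferInstanceAs (Decidable ((v.1 = 1 ∨ v.1 = 2) ∧ 1 ≤ v.2 ∧ v.2 ≤ n))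

instance instDecLadderAdj (n : ℕ) (u v : V) : Decidable (LadderAdj n u v) :=
  inferInstanceAs (Decidable (InLadder n u ∧ InLadder n v ∧
    ((u.1 = v.1 ∧ (u.2 + 1 = v.2 ∨ v.2 + 1 = u.2)) ∨
     (u.2 = v.2 ∧ (u.1 + 1 = v.1 ∨ v.1 + 1 = u.1)))))

/-- the eight vertices of the ladder -/
def lvert : Fin 8 → V := ![(1,1),(2,1),(1,2),(2,2),(1,3),(2,3),(1,4),(2,4)]

/-- index of a vertex -/
def vidF : V → Fin 8 := fun v =>
  if v = ((2,1) : V) then 1 else if v = ((1,2) : V) then 2 else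
  if v = ((2,2) : V) then 3 else if v = ((1,3) : V) then 4 else
  if v = ((2,3) : V) then 5 else if v = ((1,4) : V) then 6 else
  if v = ((2,4) : V) then 7 else 0

lemma vid_lvert : ∀ i : Fin 8, vidF (lvert i) = i := by decide

lemma ladder_lvert : ∀ i : Fin 8, InLadder 4 (lvert i) := by decide

def maskOf (S : Finset (Fin 8)) : ℕ := ∑ i ∈ S, 2 ^ (i : ℕ)

def rowW : Fin 8 → ℕ := ![4708790995857544768318467699888358411514373853061718200784987427115193781923213666847334620224442942025835593597451066483059392623970729117687034957090011085412519011953503216165836989580544527695874258099417057026347889615280196334009433879855752005849489312665900027563965217668503415972717061370744580019801888364304829397784542845521205623540908903753483530769229965143251396154656578641633853929296584835509874627526722865281398034352473640112456655179776, 84044506241644842846831188119867984926930160844574854616132034050779707773615572850781024659680720764517800919750342268446889520333881316171095441245453448329533936660439633691457812474056144919241084666800916825238910472090213547408184525057647875715926061145919561778319158312779599091908873317515822025102824922517214687455533523052004512680087868635058659946540327755870705160020628503974774931398167445201611240635191338123039502536341334403227129479232, 15962867493465378200952959043763324016056153178180116792747702699088436747894452108829662779868881254692182200393236685087344009471672933096441371769261906230348792738900919854528830182388868225867822037355423312958250148758908636614642282549798487258455609848743168784074067206688455223250445439801479730603010437594083135722338999207757715560862064099941881523642055478940039768898300997870461568585724800590468657722513307895914741327288719500452044864,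 1223307124406894578286077353655055379271898845324847347011286322319442150106367042358822412780234626387654042111880380312831446928276362023017417682823201699823066895779467177257394510152576126029746224439657580074960167137010908621383029802722694989315218647936606729304519080055749832678267469530306538751586360006141626529859734650168610211907674712605477711056217768266189803850106252907966034830961292199184464995831284830927328334183936823424, 3380268847158938032138817559663228338185056706185764885965110485240597261527821424976719403900178715029770722139022271223642174803732450795718278093448496439896141116493715481030286328119037099577935716518885327818876040598351690775731999468058730951005406006262802948840739812937606949110265153186858754589894339781354205212565496059012039273298356282897759171131571780419010044637182366404832873372329101379379980753018863840407808, 48759989861340635628526186206957171831922354052976356988007365968329014227425908216237586624754224379506919990011341081542942702990685302121441096143677219669681915718541974614615140326544600287274777196050284374818434301897035037147695017789791404961573324165529521013647383371537549724705757708345461399113389018883559091444929377574921728527797037548686192385865488262058136077233251306118198088966336, 7767914543500214992044315746170886208655507170250177677015569642693914099985134322216892043740682059518692387697892619961565406017783412130860641418857508997529923888770154069530274989800864490764802390274923493537826249170060653526927778857740887129443073127603139283632307246303456668223416938640211086304069442885947578373926957083114985505088, 1725020087641854072280924173582294949170128273560327774969739327894569373295150278128448722348669738453833550142063865991282068395998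53112404094076067206969333788047911825918056886841314079808161404340281878076644410100057069596928]

def rowW2 : Fin 8 → ℕ := ![4708791066023995288024597766707627799214977577319542440466512086340821803206211604238389343063409686880385923619813631853199747798560658626215358780913706855152425814921773026494853360394965441439119996577930583475474718260449498976745693877274702190185111468676796710336364897090612418489508028554670315115814115076289862701579220034730689862899307975825056773456734160221895027255532935549850323187827772097557871550170505270083332671951204051745302024032256, 83757175722845591658628504805755325553807454719287475001614871768462572857357016943881409762701832081170138528557572952742483617990368184566626206104545033625951114207671210375792084406963436700275097889098749403637449737151219764288656178768297152784477160130237181813405624844029552656150924041355102762468452740398260695875905179525893360362951997979313622810796367377642022347978185203905537660874171830623480480670018094762532123884573110726117075976256, 20523669651012770501124705676840245339313388089122408032411342825290504322261095817265383844297974506038567809482177069946865610622377774677752478326582589849693154096709784047270537210866986709249692670308439111616022223319462920948746209718673576253719143350177480198714961450480822754134798364672950366620190918334953258530882209293394085335908079919686244662514772547240265084683056380243036590136364470674601788336608197722482541122559669045356404800, 1087383097199923552368010167554306998184945070814508156048145999803682537330269277437554091821933383001619675092195996339370985210809726133819264253608365262738306402592612826640927614266368521423509888073963910396510806475102750421061821464199283432027595700907256549890232585736770604185775877541535773809379628332052041945044274048300343496339321938505180071061841631443671567416196674508662955152195177459805668527222552755749482396064063950976,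 4821524562009071741401379047728208346539083821534170557049885635002181566025506367173809981536198315197365251648925003455733696077246835719445056775529037424163440620288565097984135374906621356456897522271580756844601360412841232447775196684443668919159378133280544342568068448547909798375460636231295512817426093040609058810356132324242478942186215846243844533794058130566856457142432284375407745333708614202987558727122672461557888, 54761196909731438867203166900541149136701649939519943947638330083678165359035694906853331821096904361032307703933909371126521281122540277112017110339504288847618151506694629655918292367493102603297976672762341252926683728904197067492406795509954551765461315435338394071069612211567540128614368380719822650183629506665855802497317446797563225546369371123688103035579159278162274831136449848770146258141376, 8723961984082459766512364861843372874545477384481071732473179941425747589574419817363282997391735216244057296763350774164926711110452059700201415094534606588068175513553229704024930414024945929230774062388959193314195010803864201406998287168100220639894192664999321551634585254142509536514605915761081474903404666215554206511105201612037047730368, 196765936743307670073721135614966026224136025625625715581804026474063715042514610028121932256784953403684458318618991710206501807160349911257528282562995334684990865625326060651239026646993298380869004745745661780549006923966730496]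

/-- Lower-bound table for the weighting `w1` (heavy edges `(1,2)-(1,3)` and `(1,2)-(2,2)`). -/
def gW : V → Finset (Fin 8) → ℕ := fun v S => rowW (vidF v) / 64 ^ maskOf S % 64

/-- Lower-bound table for the weighting `w2` (heavy edges `(2,2)-(2,3)` and `(1,4)-(2,4)`). -/
def gW2 : V → Finset (Fin 8) → ℕ := fun v S => rowW2 (vidF v) / 64 ^ maskOf S % 64

/-- adversary weighting 1: heavy edges `(1,2)-(1,3)` and `(1,2)-(2,2)`. -/
def w1 (k : ℕ) : V → V → ℕ := fun u v =>
  if (u = ((1,2):V) ∧ v = ((1,3):V)) ∨ (u = ((1,3):V) ∧ v = ((1,2):V)) ∨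
     (u = ((1,2):V) ∧ v = ((2,2):V)) ∨ (u = ((2,2):V) ∧ v = ((1,2):V)) then k else 1

/-- adversary weighting 2: heavy edges `(2,2)-(2,3)` and `(1,4)-(2,4)`. -/
def w2 (k : ℕ) : V → V → ℕ := fun u v =>
  if (u = ((2,2):V) ∧ v = ((2,3):V)) ∨ (u = ((2,3):V) ∧ v = ((2,2):V)) ∨
     (u = ((1,4):V) ∧ v = ((2,4):V)) ∨ (u = ((2,4):V) ∧ v = ((1,4):V)) then k else 1

lemma hw1 (k : ℕ) : IsWeighting 4 k (w1 k) := by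
  constructor
  · intro u v
    unfold w1
    split_ifs with h1 h2
    · rfl
    · exact absurd (by tauto) h2
    · exact absurd (by tauto) h1
    · rfl
  · intro u v _
    unfold w1
    split_ifs
    · right; rfl
    · left; rfl

lemma hw2 (k : ℕ) : IsWeighting 4 k (w2 k) := by
  constructor
  · intro u v
    unfold w2
    split_ifs with h1 h2
    · rfl
    · exact absurd (by tauto) h2
    · exact absurd (by tauto) h1
    · rfl
  · intro u v _
    unfold w2
    split_ifs
    · right; rfl
    · left; rfl

lemma w1_pos (k : ℕ) (hk : 5 ≤ k) : ∀ u v, 1 ≤ w1 k u v := by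
  intro u v; unfold w1; split_ifs <;> omega

lemma ladder_cases {x : V} (h : InLadder 4 x) :
    x = ((1,1) : V) ∨ x = ((2,1) : V) ∨ x = ((1,2) : V) ∨ x = ((2,2) : V) ∨
    x = ((1,3) : V) ∨ x = ((2,3) : V) ∨ x = ((1,4) : V) ∨ x = ((2,4) : V) := by
  obtain ⟨a, b⟩ := x
  obtain ⟨ha, hb1, hb2⟩ := h
  replace ha : a = 1 ∨ a = 2 := ha
  replace hb1 : 1 ≤ b := hb1
  replace hb2 : b ≤ 4 := hb2
  simp only [Prod.mk.injEq]
  rcases ha with rfl | rfl <;> interval_cases b <;> decide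

set_option synthInstance.maxSize 2000 in
set_option maxHeartbeats 1000000 in
lemma adj_cases {u v : V} (h : LadderAdj 4 u v) :
    (u = ((1,1) : V) ∧ v = ((2,1) : V)) ∨
    (u = ((1,1) : V) ∧ v = ((1,2) : V)) ∨
    (u = ((2,1) : V) ∧ v = ((1,1) : V)) ∨
    (u = ((2,1) : V) ∧ v = ((2,2) : V)) ∨
    (u = ((1,2) : V) ∧ v = ((1,1) : V)) ∨
    (u = ((1,2) : V) ∧ v = ((2,2) : V)) ∨
    (u = ((1,2) : V) ∧ v = ((1,3) : V)) ∨
    (u = ((2,2) : V) ∧ v = ((2,1) : V)) ∨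
    (u = ((2,2) : V) ∧ v = ((1,2) : V)) ∨
    (u = ((2,2) : V) ∧ v = ((2,3) : V)) ∨
    (u = ((1,3) : V) ∧ v = ((1,2) : V)) ∨
    (u = ((1,3) : V) ∧ v = ((2,3) : V)) ∨
    (u = ((1,3) : V) ∧ v = ((1,4) : V)) ∨
    (u = ((2,3) : V) ∧ v = ((2,2) : V)) ∨
    (u = ((2,3) : V) ∧ v = ((1,3) : V)) ∨
    (u = ((2,3) : V) ∧ v = ((2,4) : V)) ∨
    (u = ((1,4) : V) ∧ v = ((1,3) : V)) ∨
    (u = ((1,4) : V) ∧ v = ((2,4) : V)) ∨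
    (u = ((2,4) : V) ∧ v = ((2,3) : V)) ∨
    (u = ((2,4) : V) ∧ v = ((1,4) : V)) := by
  rcases ladder_cases h.1 with rfl|rfl|rfl|rfl|rfl|rfl|rfl|rfl <;>
    rcases ladder_cases h.2.1 with rfl|rfl|rfl|rfl|rfl|rfl|rfl|rfl <;>
      first
        | decide
        | exact absurd h (by decide)

lemma nbr_of_11 {x : V} (h : LadderAdj 4 ((1,1) : V) x) :
    x = ((2,1) : V) ∨ x = ((1,2) : V) := by
  obtain ⟨a, b⟩ := x
  simp only [LadderAdj, InLadder, Prod.mk.injEq] at h ⊢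
  omega

lemma nbr_of_21 {x : V} (h : LadderAdj 4 ((2,1) : V) x) :
    x = ((1,1) : V) ∨ x = ((2,2) : V) := by
  obtain ⟨a, b⟩ := x
  simp only [LadderAdj, InLadder, Prod.mk.injEq] at h ⊢
  omega

lemma hg0W : ∀ v : V, gW v ∅ = 0 := by
  intro v
  have h : ∀ i : Fin 8, rowW i % 64 = 0 := by decide
  simp only [gW, maskOf, Finset.sum_empty, pow_zero, Nat.div_one]
  exact h (vidF v)

lemma hg0W2 : ∀ v : V, gW2 v ∅ = 0 := by
  intro v
  have h : ∀ i : Fin 8, rowW2 i % 64 = 0 := by decide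
  simp only [gW2, maskOf, Finset.sum_empty, pow_zero, Nat.div_one]
  exact h (vidF v)

lemma hstep1 (k : ℕ) (hk : 5 ≤ k) : ∀ v u, LadderAdj 4 v u → ∀ S : Finset (Fin 8),
    vidF v ∉ S → gW v S ≤ w1 k v u + gW u (S.erase (vidF u)) := by
  intro v u h S hS
  rcases adj_cases h with ⟨rfl,rfl⟩|⟨rfl,rfl⟩|⟨rfl,rfl⟩|⟨rfl,rfl⟩|⟨rfl,rfl⟩|⟨rfl,rfl⟩|⟨rfl,rfl⟩|⟨rfl,rfl⟩|⟨rfl,rfl⟩|⟨rfl,rfl⟩|⟨rfl,rfl⟩|⟨rfl,rfl⟩|⟨rfl,rfl⟩|⟨rfl,rfl⟩|⟨rfl,rfl⟩|⟨rfl,rfl⟩|⟨rfl,rfl⟩|⟨rfl,rfl⟩|⟨rfl,rfl⟩|⟨rfl,rfl⟩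
  · have hwv : w1 k ((1,1) : V) ((2,1) : V) = 1 := by
      simp only [w1]; rw [if_neg (by decide)]
    rw [hwv]
    exact (by decide : ∀ S : Finset (Fin 8), vidF ((1,1) : V) ∉ S →
      gW ((1,1) : V) S ≤ 1 + gW ((2,1) : V) (S.erase (vidF ((2,1) : V)))) S hS
  · have hwv : w1 k ((1,1) : V) ((1,2) : V) = 1 := by
      simp only [w1]; rw [if_neg (by decide)]
    rw [hwv]
    exact (by decide : ∀ S : Finset (Fin 8), vidF ((1,1) : V) ∉ S →
      gW ((1,1) : V) S ≤ 1 + gW ((1,2) : V) (S.erase (vidF ((1,2) : V)))) S hS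
  · have hwv : w1 k ((2,1) : V) ((1,1) : V) = 1 := by
      simp only [w1]; rw [if_neg (by decide)]
    rw [hwv]
    exact (by decide : ∀ S : Finset (Fin 8), vidF ((2,1) : V) ∉ S →
      gW ((2,1) : V) S ≤ 1 + gW ((1,1) : V) (S.erase (vidF ((1,1) : V)))) S hS
  · have hwv : w1 k ((2,1) : V) ((2,2) : V) = 1 := by
      simp only [w1]; rw [if_neg (by decide)]
    rw [hwv]
    exact (by decide : ∀ S : Finset (Fin 8), vidF ((2,1) : V) ∉ S →
      gW ((2,1) : V) S ≤ 1 + gW ((2,2) : V) (S.erase (vidF ((2,2) : V)))) S hS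
  · have hwv : w1 k ((1,2) : V) ((1,1) : V) = 1 := by
      simp only [w1]; rw [if_neg (by decide)]
    rw [hwv]
    exact (by decide : ∀ S : Finset (Fin 8), vidF ((1,2) : V) ∉ S →
      gW ((1,2) : V) S ≤ 1 + gW ((1,1) : V) (S.erase (vidF ((1,1) : V)))) S hS
  · have hwv : w1 k ((1,2) : V) ((2,2) : V) = k := by
      simp only [w1]; rw [if_pos (by decide)]
    rw [hwv]
    have h5 := (by decide : ∀ S : Finset (Fin 8), vidF ((1,2) : V) ∉ S →
      gW ((1,2) : V) S ≤ 5 + gW ((2,2) : V) (S.erase (vidF ((2,2) : V)))) S hS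
    omega
  · have hwv : w1 k ((1,2) : V) ((1,3) : V) = k := by
      simp only [w1]; rw [if_pos (by decide)]
    rw [hwv]
    have h5 := (by decide : ∀ S : Finset (Fin 8), vidF ((1,2) : V) ∉ S →
      gW ((1,2) : V) S ≤ 5 + gW ((1,3) : V) (S.erase (vidF ((1,3) : V)))) S hS
    omega
  · have hwv : w1 k ((2,2) : V) ((2,1) : V) = 1 := by
      simp only [w1]; rw [if_neg (by decide)]
    rw [hwv]
    exact (by decide : ∀ S : Finset (Fin 8), vidF ((2,2) : V) ∉ S →
      gW ((2,2) : V) S ≤ 1 + gW ((2,1) : V) (S.erase (vidF ((2,1) : V)))) S hS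
  · have hwv : w1 k ((2,2) : V) ((1,2) : V) = k := by
      simp only [w1]; rw [if_pos (by decide)]
    rw [hwv]
    have h5 := (by decide : ∀ S : Finset (Fin 8), vidF ((2,2) : V) ∉ S →
      gW ((2,2) : V) S ≤ 5 + gW ((1,2) : V) (S.erase (vidF ((1,2) : V)))) S hS
    omega
  · have hwv : w1 k ((2,2) : V) ((2,3) : V) = 1 := by
      simp only [w1]; rw [if_neg (by decide)]
    rw [hwv]
    exact (by decide : ∀ S : Finset (Fin 8), vidF ((2,2) : V) ∉ S →
      gW ((2,2) : V) S ≤ 1 + gW ((2,3) : V) (S.erase (vidF ((2,3) : V)))) S hS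
  · have hwv : w1 k ((1,3) : V) ((1,2) : V) = k := by
      simp only [w1]; rw [if_pos (by decide)]
    rw [hwv]
    have h5 := (by decide : ∀ S : Finset (Fin 8), vidF ((1,3) : V) ∉ S →
      gW ((1,3) : V) S ≤ 5 + gW ((1,2) : V) (S.erase (vidF ((1,2) : V)))) S hS
    omega
  · have hwv : w1 k ((1,3) : V) ((2,3) : V) = 1 := by
      simp only [w1]; rw [if_neg (by decide)]
    rw [hwv]
    exact (by decide : ∀ S : Finset (Fin 8), vidF ((1,3) : V) ∉ S →
      gW ((1,3) : V) S ≤ 1 + gW ((2,3) : V) (S.erase (vidF ((2,3) : V)))) S hS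
  · have hwv : w1 k ((1,3) : V) ((1,4) : V) = 1 := by
      simp only [w1]; rw [if_neg (by decide)]
    rw [hwv]
    exact (by decide : ∀ S : Finset (Fin 8), vidF ((1,3) : V) ∉ S →
      gW ((1,3) : V) S ≤ 1 + gW ((1,4) : V) (S.erase (vidF ((1,4) : V)))) S hS
  · have hwv : w1 k ((2,3) : V) ((2,2) : V) = 1 := by
      simp only [w1]; rw [if_neg (by decide)]
    rw [hwv]
    exact (by decide : ∀ S : Finset (Fin 8), vidF ((2,3) : V) ∉ S →
      gW ((2,3) : V) S ≤ 1 + gW ((2,2) : V) (S.erase (vidF ((2,2) : V)))) S hS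
  · have hwv : w1 k ((2,3) : V) ((1,3) : V) = 1 := by
      simp only [w1]; rw [if_neg (by decide)]
    rw [hwv]
    exact (by decide : ∀ S : Finset (Fin 8), vidF ((2,3) : V) ∉ S →
      gW ((2,3) : V) S ≤ 1 + gW ((1,3) : V) (S.erase (vidF ((1,3) : V)))) S hS
  · have hwv : w1 k ((2,3) : V) ((2,4) : V) = 1 := by
      simp only [w1]; rw [if_neg (by decide)]
    rw [hwv]
    exact (by decide : ∀ S : Finset (Fin 8), vidF ((2,3) : V) ∉ S →
      gW ((2,3) : V) S ≤ 1 + gW ((2,4) : V) (S.erase (vidF ((2,4) : V)))) S hS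
  · have hwv : w1 k ((1,4) : V) ((1,3) : V) = 1 := by
      simp only [w1]; rw [if_neg (by decide)]
    rw [hwv]
    exact (by decide : ∀ S : Finset (Fin 8), vidF ((1,4) : V) ∉ S →
      gW ((1,4) : V) S ≤ 1 + gW ((1,3) : V) (S.erase (vidF ((1,3) : V)))) S hS
  · have hwv : w1 k ((1,4) : V) ((2,4) : V) = 1 := by
      simp only [w1]; rw [if_neg (by decide)]
    rw [hwv]
    exact (by decide : ∀ S : Finset (Fin 8), vidF ((1,4) : V) ∉ S →
      gW ((1,4) : V) S ≤ 1 + gW ((2,4) : V) (S.erase (vidF ((2,4) : V)))) S hS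
  · have hwv : w1 k ((2,4) : V) ((2,3) : V) = 1 := by
      simp only [w1]; rw [if_neg (by decide)]
    rw [hwv]
    exact (by decide : ∀ S : Finset (Fin 8), vidF ((2,4) : V) ∉ S →
      gW ((2,4) : V) S ≤ 1 + gW ((2,3) : V) (S.erase (vidF ((2,3) : V)))) S hS
  · have hwv : w1 k ((2,4) : V) ((1,4) : V) = 1 := by
      simp only [w1]; rw [if_neg (by decide)]
    rw [hwv]
    exact (by decide : ∀ S : Finset (Fin 8), vidF ((2,4) : V) ∉ S →
      gW ((2,4) : V) S ≤ 1 + gW ((1,4) : V) (S.erase (vidF ((1,4) : V)))) S hS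

lemma hstep2 (k : ℕ) (hk : 5 ≤ k) : ∀ v u, LadderAdj 4 v u → ∀ S : Finset (Fin 8),
    vidF v ∉ S → gW2 v S ≤ w2 k v u + gW2 u (S.erase (vidF u)) := by
  intro v u h S hS
  rcases adj_cases h with ⟨rfl,rfl⟩|⟨rfl,rfl⟩|⟨rfl,rfl⟩|⟨rfl,rfl⟩|⟨rfl,rfl⟩|⟨rfl,rfl⟩|⟨rfl,rfl⟩|⟨rfl,rfl⟩|⟨rfl,rfl⟩|⟨rfl,rfl⟩|⟨rfl,rfl⟩|⟨rfl,rfl⟩|⟨rfl,rfl⟩|⟨rfl,rfl⟩|⟨rfl,rfl⟩|⟨rfl,rfl⟩|⟨rfl,rfl⟩|⟨rfl,rfl⟩|⟨rfl,rfl⟩|⟨rfl,rfl⟩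
  · have hwv : w2 k ((1,1) : V) ((2,1) : V) = 1 := by
      simp only [w2]; rw [if_neg (by decide)]
    rw [hwv]
    exact (by decide : ∀ S : Finset (Fin 8), vidF ((1,1) : V) ∉ S →
      gW2 ((1,1) : V) S ≤ 1 + gW2 ((2,1) : V) (S.erase (vidF ((2,1) : V)))) S hS
  · have hwv : w2 k ((1,1) : V) ((1,2) : V) = 1 := by
      simp only [w2]; rw [if_neg (by decide)]
    rw [hwv]
    exact (by decide : ∀ S : Finset (Fin 8), vidF ((1,1) : V) ∉ S →
      gW2 ((1,1) : V) S ≤ 1 + gW2 ((1,2) : V) (S.erase (vidF ((1,2) : V)))) S hS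
  · have hwv : w2 k ((2,1) : V) ((1,1) : V) = 1 := by
      simp only [w2]; rw [if_neg (by decide)]
    rw [hwv]
    exact (by decide : ∀ S : Finset (Fin 8), vidF ((2,1) : V) ∉ S →
      gW2 ((2,1) : V) S ≤ 1 + gW2 ((1,1) : V) (S.erase (vidF ((1,1) : V)))) S hS
  · have hwv : w2 k ((2,1) : V) ((2,2) : V) = 1 := by
      simp only [w2]; rw [if_neg (by decide)]
    rw [hwv]
    exact (by decide : ∀ S : Finset (Fin 8), vidF ((2,1) : V) ∉ S →
      gW2 ((2,1) : V) S ≤ 1 + gW2 ((2,2) : V) (S.erase (vidF ((2,2) : V)))) S hS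
  · have hwv : w2 k ((1,2) : V) ((1,1) : V) = 1 := by
      simp only [w2]; rw [if_neg (by decide)]
    rw [hwv]
    exact (by decide : ∀ S : Finset (Fin 8), vidF ((1,2) : V) ∉ S →
      gW2 ((1,2) : V) S ≤ 1 + gW2 ((1,1) : V) (S.erase (vidF ((1,1) : V)))) S hS
  · have hwv : w2 k ((1,2) : V) ((2,2) : V) = 1 := by
      simp only [w2]; rw [if_neg (by decide)]
    rw [hwv]
    exact (by decide : ∀ S : Finset (Fin 8), vidF ((1,2) : V) ∉ S →
      gW2 ((1,2) : V) S ≤ 1 + gW2 ((2,2) : V) (S.erase (vidF ((2,2) : V)))) S hS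
  · have hwv : w2 k ((1,2) : V) ((1,3) : V) = 1 := by
      simp only [w2]; rw [if_neg (by decide)]
    rw [hwv]
    exact (by decide : ∀ S : Finset (Fin 8), vidF ((1,2) : V) ∉ S →
      gW2 ((1,2) : V) S ≤ 1 + gW2 ((1,3) : V) (S.erase (vidF ((1,3) : V)))) S hS
  · have hwv : w2 k ((2,2) : V) ((2,1) : V) = 1 := by
      simp only [w2]; rw [if_neg (by decide)]
    rw [hwv]
    exact (by decide : ∀ S : Finset (Fin 8), vidF ((2,2) : V) ∉ S →
      gW2 ((2,2) : V) S ≤ 1 + gW2 ((2,1) : V) (S.erase (vidF ((2,1) : V)))) S hS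
  · have hwv : w2 k ((2,2) : V) ((1,2) : V) = 1 := by
      simp only [w2]; rw [if_neg (by decide)]
    rw [hwv]
    exact (by decide : ∀ S : Finset (Fin 8), vidF ((2,2) : V) ∉ S →
      gW2 ((2,2) : V) S ≤ 1 + gW2 ((1,2) : V) (S.erase (vidF ((1,2) : V)))) S hS
  · have hwv : w2 k ((2,2) : V) ((2,3) : V) = k := by
      simp only [w2]; rw [if_pos (by decide)]
    rw [hwv]
    have h5 := (by decide : ∀ S : Finset (Fin 8), vidF ((2,2) : V) ∉ S →
      gW2 ((2,2) : V) S ≤ 5 + gW2 ((2,3) : V) (S.erase (vidF ((2,3) : V)))) S hS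
    omega
  · have hwv : w2 k ((1,3) : V) ((1,2) : V) = 1 := by
      simp only [w2]; rw [if_neg (by decide)]
    rw [hwv]
    exact (by decide : ∀ S : Finset (Fin 8), vidF ((1,3) : V) ∉ S →
      gW2 ((1,3) : V) S ≤ 1 + gW2 ((1,2) : V) (S.erase (vidF ((1,2) : V)))) S hS
  · have hwv : w2 k ((1,3) : V) ((2,3) : V) = 1 := by
      simp only [w2]; rw [if_neg (by decide)]
    rw [hwv]
    exact (by decide : ∀ S : Finset (Fin 8), vidF ((1,3) : V) ∉ S →
      gW2 ((1,3) : V) S ≤ 1 + gW2 ((2,3) : V) (S.erase (vidF ((2,3) : V)))) S hS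
  · have hwv : w2 k ((1,3) : V) ((1,4) : V) = 1 := by
      simp only [w2]; rw [if_neg (by decide)]
    rw [hwv]
    exact (by decide : ∀ S : Finset (Fin 8), vidF ((1,3) : V) ∉ S →
      gW2 ((1,3) : V) S ≤ 1 + gW2 ((1,4) : V) (S.erase (vidF ((1,4) : V)))) S hS
  · have hwv : w2 k ((2,3) : V) ((2,2) : V) = k := by
      simp only [w2]; rw [if_pos (by decide)]
    rw [hwv]
    have h5 := (by decide : ∀ S : Finset (Fin 8), vidF ((2,3) : V) ∉ S →
      gW2 ((2,3) : V) S ≤ 5 + gW2 ((2,2) : V) (S.erase (vidF ((2,2) : V)))) S hS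
    omega
  · have hwv : w2 k ((2,3) : V) ((1,3) : V) = 1 := by
      simp only [w2]; rw [if_neg (by decide)]
    rw [hwv]
    exact (by decide : ∀ S : Finset (Fin 8), vidF ((2,3) : V) ∉ S →
      gW2 ((2,3) : V) S ≤ 1 + gW2 ((1,3) : V) (S.erase (vidF ((1,3) : V)))) S hS
  · have hwv : w2 k ((2,3) : V) ((2,4) : V) = 1 := by
      simp only [w2]; rw [if_neg (by decide)]
    rw [hwv]
    exact (by decide : ∀ S : Finset (Fin 8), vidF ((2,3) : V) ∉ S →
      gW2 ((2,3) : V) S ≤ 1 + gW2 ((2,4) : V) (S.erase (vidF ((2,4) : V)))) S hS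
  · have hwv : w2 k ((1,4) : V) ((1,3) : V) = 1 := by
      simp only [w2]; rw [if_neg (by decide)]
    rw [hwv]
    exact (by decide : ∀ S : Finset (Fin 8), vidF ((1,4) : V) ∉ S →
      gW2 ((1,4) : V) S ≤ 1 + gW2 ((1,3) : V) (S.erase (vidF ((1,3) : V)))) S hS
  · have hwv : w2 k ((1,4) : V) ((2,4) : V) = k := by
      simp only [w2]; rw [if_pos (by decide)]
    rw [hwv]
    have h5 := (by decide : ∀ S : Finset (Fin 8), vidF ((1,4) : V) ∉ S →
      gW2 ((1,4) : V) S ≤ 5 + gW2 ((2,4) : V) (S.erase (vidF ((2,4) : V)))) S hS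
    omega
  · have hwv : w2 k ((2,4) : V) ((2,3) : V) = 1 := by
      simp only [w2]; rw [if_neg (by decide)]
    rw [hwv]
    exact (by decide : ∀ S : Finset (Fin 8), vidF ((2,4) : V) ∉ S →
      gW2 ((2,4) : V) S ≤ 1 + gW2 ((2,3) : V) (S.erase (vidF ((2,3) : V)))) S hS
  · have hwv : w2 k ((2,4) : V) ((1,4) : V) = k := by
      simp only [w2]; rw [if_pos (by decide)]
    rw [hwv]
    have h5 := (by decide : ∀ S : Finset (Fin 8), vidF ((2,4) : V) ∉ S →
      gW2 ((2,4) : V) S ≤ 5 + gW2 ((1,4) : V) (S.erase (vidF ((1,4) : V)))) S hS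
    omega


lemma walkCost_cons (w : V → V → ℕ) (a b : V) (l : List V) :
    walkCost w (a :: b :: l) = w a b + walkCost w (b :: l) := by
  simp [walkCost]

lemma walkCost_single (w : V → V → ℕ) (a : V) : walkCost w [a] = 0 := by
  simp [walkCost]

/-- Core lower-bound lemma: any walk which covers the set `S` costs at least the
table value. -/
lemma suffix_bound (w : V → V → ℕ) (g : V → Finset (Fin 8) → ℕ)
    (hg0 : ∀ v, g v ∅ = 0)
    (hstep : ∀ v u, LadderAdj 4 v u → ∀ S, vidF v ∉ S →
      g v S ≤ w v u + g u (S.erase (vidF u))) :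
    ∀ (q : List V) (v : V) (S : Finset (Fin 8)), List.Chain' (LadderAdj 4) (v :: q) →
      vidF v ∉ S → (∀ i ∈ S, lvert i ∈ v :: q) → g v S ≤ walkCost w (v :: q) := by
  intro q
  induction q with
  | nil =>
    intro v S _ hv hcov
    have hS : S = ∅ := by
      by_contra hne
      obtain ⟨i, hi⟩ := Finset.nonempty_iff_ne_empty.mpr hne
      have hm := hcov i hi
      simp only [List.mem_singleton] at hm
      have hiv : i = vidF v := by rw [← hm]; exact (vid_lvert i).symm
      exact hv (hiv ▸ hi)
    rw [hS, hg0]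
    exact Nat.zero_le _
  | cons u q ih =>
    intro v S hch hv hcov
    unfold List.Chain' at hch; rw [List.isChain_cons_cons] at hch
    have hstep' := hstep v u hch.1 S hv
    have hrec : g u (S.erase (vidF u)) ≤ walkCost w (u :: q) := by
      refine ih u (S.erase (vidF u)) hch.2 (Finset.notMem_erase _ _) ?_
      intro i hi
      have hiS := Finset.mem_of_mem_erase hi
      rcases List.mem_cons.mp (hcov i hiS) with h1 | h1
      · exfalso
        apply hv
        have hiv : i = vidF v := by rw [← h1]; exact (vid_lvert i).symm
        exact hiv ▸ hiS
      · exact h1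
    rw [walkCost_cons]
    omega

lemma walkCost_split (w : V → V → ℕ) : ∀ (m : ℕ) (p : List V),
    walkCost w p = walkCost w (p.take (m + 1)) + walkCost w (p.drop m) := by
  intro m
  induction m with
  | zero =>
    intro p
    cases p with
    | nil => rfl
    | cons a t =>
      show walkCost w (a :: t) = walkCost w [a] + walkCost w (a :: t)
      rw [walkCost_single]
      omega
  | succ m ih =>
    intro p
    match p with
    | [] =>
      rw [List.take_nil, List.drop_nil]
      rfl
    | [a] =>
      have h2 : ([a] : List V).take (m + 1 + 1) = a :: ([] : List V).take (m + 1) := rfl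
      have h3 : ([a] : List V).drop (m + 1) = ([] : List V).drop m := rfl
      rw [h2, h3, List.take_nil, List.drop_nil]
      have h0 : walkCost w ([] : List V) = 0 := rfl
      rw [walkCost_single, h0]
    | a :: b :: t =>
      have h2 : (a :: b :: t).take (m + 1 + 1) = a :: b :: t.take m := rfl
      have h3 : (a :: b :: t).drop (m + 1) = (b :: t).drop m := rfl
      have h5 : (b :: t).take (m + 1) = b :: t.take m := rfl
      have hi := ih (b :: t)
      rw [h5] at hi
      rw [h2, h3, walkCost_cons, walkCost_cons, hi]
      omega

lemma length_le_walkCost (w : V → V → ℕ) (hw : ∀ u v, 1 ≤ w u v) :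
    ∀ p : List V, p.length ≤ walkCost w p + 1 := by
  intro p
  induction p with
  | nil => simp
  | cons a t ih =>
    cases t with
    | nil => simp [walkCost_single]
    | cons b t' =>
      rw [walkCost_cons]
      have := hw a b
      simp only [List.length_cons] at *
      omega

lemma w1_left_one (k : ℕ) (v : V) : w1 k ((1,1) : V) v = 1 := by
  simp only [w1]; rw [if_neg]
  rintro (⟨h, -⟩ | ⟨h, -⟩ | ⟨h, -⟩ | ⟨h, -⟩) <;> exact absurd h (by decide)

lemma w2_left_one (k : ℕ) (v : V) : w2 k ((1,1) : V) v = 1 := by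
  simp only [w2]; rw [if_neg]
  rintro (⟨h, -⟩ | ⟨h, -⟩ | ⟨h, -⟩ | ⟨h, -⟩) <;> exact absurd h (by decide)

lemma w1_right_one (k : ℕ) (u : V) : w1 k u ((1,1) : V) = 1 := by
  simp only [w1]; rw [if_neg]
  rintro (⟨-, h⟩ | ⟨-, h⟩ | ⟨-, h⟩ | ⟨-, h⟩) <;> exact absurd h (by decide)

lemma w2_right_one (k : ℕ) (u : V) : w2 k u ((1,1) : V) = 1 := by
  simp only [w2]; rw [if_neg]
  rintro (⟨-, h⟩ | ⟨-, h⟩ | ⟨-, h⟩ | ⟨-, h⟩) <;> exact absurd h (by decide)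

lemma chain'_drop {R : V → V → Prop} : ∀ (n : ℕ) {l : List V},
    List.Chain' R l → List.Chain' R (l.drop n)
  | 0, _, h => h
  | n + 1, l, h => by
    rw [← List.tail_drop]
    exact (chain'_drop n h).tail

/-! ### The two candidate optimal explorations -/

def DL : List V := [(1,2),(2,2),(1,3),(2,3),(1,4),(2,4)]

def predD : V → Bool := fun x => decide (x ∈ DL)

def P1 : List V := [(1,1),(1,2),(1,1),(2,1),(2,2),(2,3),(2,4),(1,4),(1,3)]

def P2 : List V := [(1,1),(2,1),(2,2),(1,2),(1,3),(1,4),(1,3),(2,3),(2,4)]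

lemma expl_P1 : IsExploration 4 P1 := by
  refine ⟨⟨rfl, by simp only [P1, List.Chain', List.isChain_cons_cons, List.isChain_singleton, and_true]; decide⟩, ?_⟩
  intro v hv
  rcases ladder_cases hv with rfl|rfl|rfl|rfl|rfl|rfl|rfl|rfl <;> decide

lemma expl_P2 : IsExploration 4 P2 := by
  refine ⟨⟨rfl, by simp only [P2, List.Chain', List.isChain_cons_cons, List.isChain_singleton, and_true]; decide⟩, ?_⟩
  intro v hv
  rcases ladder_cases hv with rfl|rfl|rfl|rfl|rfl|rfl|rfl|rfl <;> decide

lemma cost_P1 (k : ℕ) : walkCost (w1 k) P1 = 8 := by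
  show walkCost (w1 k)
    [((1,1):V),((1,2):V),((1,1):V),((2,1):V),((2,2):V),((2,3):V),((2,4):V),((1,4):V),((1,3):V)] = 8
  rw [walkCost_cons, walkCost_cons, walkCost_cons, walkCost_cons, walkCost_cons,
    walkCost_cons, walkCost_cons, walkCost_cons, walkCost_single]
  simp only [w1]
  rw [if_neg (by decide), if_neg (by decide), if_neg (by decide), if_neg (by decide),
    if_neg (by decide), if_neg (by decide), if_neg (by decide), if_neg (by decide)]

lemma cost_P2 (k : ℕ) : walkCost (w2 k) P2 = 8 := by
  show walkCost (w2 k)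
    [((1,1):V),((2,1):V),((2,2):V),((1,2):V),((1,3):V),((1,4):V),((1,3):V),((2,3):V),((2,4):V)] = 8
  rw [walkCost_cons, walkCost_cons, walkCost_cons, walkCost_cons, walkCost_cons,
    walkCost_cons, walkCost_cons, walkCost_cons, walkCost_single]
  simp only [w2]
  rw [if_neg (by decide), if_neg (by decide), if_neg (by decide), if_neg (by decide),
    if_neg (by decide), if_neg (by decide), if_neg (by decide), if_neg (by decide)]

lemma OPT_w1 (k : ℕ) (hk : 5 ≤ k) : OPT 4 (w1 k) = 8 := by
  have hm : (8:ℕ) ∈ {c | ∃ p, IsExploration 4 p ∧ walkCost (w1 k) p = c} :=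
    ⟨P1, expl_P1, cost_P1 k⟩
  refine le_antisymm (Nat.sInf_le hm) (le_csInf ⟨8, hm⟩ ?_)
  rintro c ⟨p, ⟨⟨hh, hch⟩, hcov⟩, rfl⟩
  obtain ⟨t, rfl⟩ : ∃ t, p = ((1,1) : V) :: t := by
    cases p with
    | nil => simp at hh
    | cons a t =>
      simp only [List.head?_cons, Option.some.injEq] at hh
      exact ⟨t, by rw [hh]⟩
  have hb := suffix_bound (w1 k) gW hg0W (hstep1 k hk) t ((1,1) : V)
      ({1,2,3,4,5,6,7} : Finset (Fin 8)) hch (by decide)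
      (fun i _ => hcov (lvert i) (ladder_lvert i))
  have hv : gW ((1,1) : V) ({1,2,3,4,5,6,7} : Finset (Fin 8)) = 8 := by decide
  omega

lemma OPT_w2 (k : ℕ) (hk : 5 ≤ k) : OPT 4 (w2 k) = 8 := by
  have hm : (8:ℕ) ∈ {c | ∃ p, IsExploration 4 p ∧ walkCost (w2 k) p = c} :=
    ⟨P2, expl_P2, cost_P2 k⟩
  refine le_antisymm (Nat.sInf_le hm) (le_csInf ⟨8, hm⟩ ?_)
  rintro c ⟨p, ⟨⟨hh, hch⟩, hcov⟩, rfl⟩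
  obtain ⟨t, rfl⟩ : ∃ t, p = ((1,1) : V) :: t := by
    cases p with
    | nil => simp at hh
    | cons a t =>
      simp only [List.head?_cons, Option.some.injEq] at hh
      exact ⟨t, by rw [hh]⟩
  have hb := suffix_bound (w2 k) gW2 hg0W2 (hstep2 k hk) t ((1,1) : V)
      ({1,2,3,4,5,6,7} : Finset (Fin 8)) hch (by decide)
      (fun i _ => hcov (lvert i) (ladder_lvert i))
  have hv : gW2 ((1,1) : V) ({1,2,3,4,5,6,7} : Finset (Fin 8)) = 8 := by decide
  omega

/-- Lower bound of 5/4 on the strict competitive ratio on `G_{2,4}`: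
for every `k ≥ 5` and every deterministic online strategy, there is a weighting
with `OPT = 8` on which the strategy pays at least `10`. -/
theorem ladder_2_4_lower_bound (k : ℕ) (hk : 5 ≤ k)
    (A : (V → V → ℕ) → List V) (hA : OnlineStrategy 4 k A) :
    ∃ w : V → V → ℕ, IsWeighting 4 k w ∧ OPT 4 w = 8 ∧
      10 ≤ walkCost w (A w) := by
  obtain ⟨hA1, hA2⟩ := hA
  obtain ⟨⟨hh, hch⟩, hcov⟩ := hA1 (w1 k) (hw1 k)
  set P : List V := A (w1 k) with hPdef
  obtain ⟨t0, hp⟩ : ∃ t, P = ((1,1) : V) :: t := by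
    cases hAp : P with
    | nil => rw [hAp] at hh; simp at hh
    | cons a t =>
      rw [hAp] at hh
      simp only [List.head?_cons, Option.some.injEq] at hh
      exact ⟨t, by rw [hh]⟩
  have hchainIdx : ∀ i (h1 : i < P.length) (h2 : i + 1 < P.length),
      LadderAdj 4 (P[i]'h1) (P[i+1]'h2) := by
    intro i h1 h2
    have h3 := List.isChain_iff_getElem.mp hch i (by omega)
    simpa [List.get_eq_getElem] using h3
  have hmem14 : ((1,4) : V) ∈ P := hcov _ (by decide)
  have hTlt0 : P.findIdx predD < P.length :=
    List.findIdx_lt_length_of_exists ⟨_, hmem14, by decide⟩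
  obtain ⟨T, hTlt, hPT, hbefore⟩ :
      ∃ T, ∃ (hTlt : T < P.length), (P[T]'hTlt ∈ DL) ∧
        ∀ j (h1 : j < P.length), j < T → P[j]'h1 ∉ DL := by
    refine ⟨P.findIdx predD, hTlt0, ?_, ?_⟩
    · have h := List.findIdx_getElem (p := predD) (xs := P) (w := hTlt0)
      simpa [predD] using h
    · intro j h1 hj
      have h := List.not_of_lt_findIdx (p := predD) (xs := P) hj
      have h' : predD (P[j]'h1) = false := h
      simpa [predD] using h'
  have hP0 : ∀ (h0 : 0 < P.length), P[0]'h0 = ((1,1):V) := by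
    intro h0
    simp only [hp, List.getElem_cons_zero]
  have hT1 : 1 ≤ T := by
    by_contra hc
    have hT0 : T = 0 := by omega
    subst hT0
    rw [hP0 hTlt] at hPT
    exact absurd hPT (by decide)
  have hcol : ∀ j (h1 : j < P.length), j < T →
      (P[j]'h1 = ((1,1):V) ∨ P[j]'h1 = ((2,1):V)) := by
    intro j h1 hjT
    have hadj := hchainIdx j h1 (by omega)
    have hnot := hbefore j h1 hjT
    rcases ladder_cases hadj.1 with h|h|h|h|h|h|h|h
    · exact Or.inl h
    · exact Or.inr h
    · rw [h] at hnot; exact absurd (by decide) hnot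
    · rw [h] at hnot; exact absurd (by decide) hnot
    · rw [h] at hnot; exact absurd (by decide) hnot
    · rw [h] at hnot; exact absurd (by decide) hnot
    · rw [h] at hnot; exact absurd (by decide) hnot
    · rw [h] at hnot; exact absurd (by decide) hnot
  rcases eq_or_lt_of_le hT1 with hT1e | hT2
  · -- Case A : the walk leaves column 1 at step 1, necessarily to (1,2).
    -- The adversary answers with the weighting w2.
    obtain rfl : T = 1 := hT1e.symm
    have hadj01 : LadderAdj 4 ((1,1):V) (P[1]'hTlt) := by
      have h := hchainIdx 0 (by omega) (by omega)
      rw [hP0] at h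
      exact h
    rcases nbr_of_11 hadj01 with h1 | h1
    · rw [h1] at hPT; exact absurd hPT (by decide)
    -- h1 : P[1] = (1,2)
    refine ⟨w2 k, hw2 k, OPT_w2 k hk, ?_⟩
    have hagree : ∀ u v, LadderAdj 4 u v →
        (u ∈ (A (w1 k)).take (0 + 1) ∨ v ∈ (A (w1 k)).take (0 + 1)) →
        w1 k u v = w2 k u v := by
      intro u v _ hm
      have htake : (A (w1 k)).take (0 + 1) = [((1,1) : V)] := by
        rw [← hPdef, hp]; rfl
      rw [htake] at hm
      simp only [List.mem_singleton] at hm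
      rcases hm with rfl | rfl
      · rw [w1_left_one, w2_left_one]
      · rw [w1_right_one, w2_right_one]
    have hsame := hA2 (w1 k) (w2 k) (hw1 k) (hw2 k) 0 hagree
    have htake2 : (A (w1 k)).take (0 + 2) = [((1,1):V), ((1,2):V)] := by
      obtain ⟨t1, ht1⟩ : ∃ t1, t0 = ((1,2) : V) :: t1 := by
        cases ht0 : t0 with
        | nil =>
          rw [ht0] at hp
          rw [hp] at hTlt
          simp at hTlt
        | cons b t1 =>
          have hb : P[1]'hTlt = b := by
            simp only [hp, ht0]
            rfl
          rw [hb] at h1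
          exact ⟨t1, by rw [h1]⟩
      rw [← hPdef, hp, ht1]; rfl
    rw [htake2] at hsame
    obtain ⟨⟨hh2, hch2⟩, hcov2⟩ := hA1 (w2 k) (hw2 k)
    obtain ⟨r, hq⟩ : ∃ r, A (w2 k) = ((1,1):V) :: ((1,2):V) :: r := by
      cases hAq : A (w2 k) with
      | nil => rw [hAq] at hsame; simp at hsame
      | cons x s =>
        cases hs : s with
        | nil =>
          rw [hAq, hs] at hsame
          have h' : ([((1,1):V), ((1,2):V)] : List V) = [x] := hsame
          simp at h'
        | cons y s' =>
          rw [hAq, hs] at hsame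
          have h' : ([((1,1):V), ((1,2):V)] : List V) = [x, y] := hsame
          simp only [List.cons.injEq, and_true] at h'
          obtain ⟨hx, hy⟩ := h'
          exact ⟨s', by rw [← hx, ← hy]⟩
    rw [hq, walkCost_cons]
    have hw12 : w2 k ((1,1):V) ((1,2):V) = 1 := w2_left_one k _
    have hchq : List.Chain' (LadderAdj 4) (((1,2):V) :: r) := by
      have h := hch2
      rw [hq] at h
      exact h.tail
    have hcovq : ∀ i ∈ ({1,3,4,5,6,7} : Finset (Fin 8)), lvert i ∈ ((1,2):V) :: r := by
      intro i hi
      have hin := hcov2 (lvert i) (ladder_lvert i)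
      rw [hq] at hin
      rcases List.mem_cons.mp hin with h2 | h2
      · exfalso
        have hiv : i = vidF ((1,1):V) := by rw [← h2]; exact (vid_lvert i).symm
        rw [hiv] at hi
        exact absurd hi (by decide)
      · exact h2
    have hsb := suffix_bound (w2 k) gW2 hg0W2 (hstep2 k hk) r ((1,2):V)
        ({1,3,4,5,6,7} : Finset (Fin 8)) hchq (by decide) hcovq
    have hval : gW2 ((1,2):V) ({1,3,4,5,6,7} : Finset (Fin 8)) = 9 := by decide
    omega
  · -- Case B/C : the walk stays in column 1 for at least two steps;
    -- the adversary answers with the weighting w1 itself.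
    refine ⟨w1 k, hw1 k, OPT_w1 k hk, ?_⟩
    rw [← hPdef]
    obtain ⟨j, rfl⟩ : ∃ j, T = j + 1 := ⟨T - 1, by omega⟩
    have hadjT : LadderAdj 4 (P[j]'(by omega)) (P[j+1]'hTlt) :=
      hchainIdx j (by omega) hTlt
    have hsplit := walkCost_split (w1 k) (j+1) P
    have hlen1 : j + 1 ≤ walkCost (w1 k) (P.take (j+1+1)) := by
      have hl := length_le_walkCost (w1 k) (w1_pos k hk) (P.take (j+1+1))
      rw [List.length_take] at hl
      omega
    have hdrop : P.drop (j+1) = (P[j+1]'hTlt) :: P.drop (j+1+1) :=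
      List.drop_eq_getElem_cons hTlt
    have hchd0 : List.Chain' (LadderAdj 4) ((P[j+1]'hTlt) :: P.drop (j+1+1)) := by
      rw [← hdrop]
      exact chain'_drop (j+1) hch
    have hcovd : ∀ (x : V), x ∈ DL → x ≠ P[j+1]'hTlt → x ∈ P.drop (j+1+1) := by
      intro x hxDL hxne
      have hin := hcov x ((by decide : ∀ y ∈ DL, InLadder 4 y) x hxDL)
      conv at hin => rw [← List.take_append_drop (j+1) P]
      rcases List.mem_append.mp hin with h3 | h3
      · exfalso
        obtain ⟨i2, hi2, hix⟩ := List.mem_iff_getElem.mp h3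
        have hi2' : i2 < j + 1 := by
          rw [List.length_take] at hi2; omega
        have hi2len : i2 < P.length := by omega
        have heq : x = P[i2]'hi2len := by
          rw [← hix]
          exact List.getElem_take
        rcases hcol i2 hi2len hi2' with h4 | h4
        · rw [h4] at heq
          rw [heq] at hxDL
          exact absurd hxDL (by decide)
        · rw [h4] at heq
          rw [heq] at hxDL
          exact absurd hxDL (by decide)
      · rw [hdrop] at h3
        rcases List.mem_cons.mp h3 with h4 | h4
        · exact absurd h4 hxne
        · exact h4
    rcases hcol j (by omega) (by omega) with hprev | hprev
    · -- came from (1,1) : P[T] = (1,2) and T ≥ 3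
      rw [hprev] at hadjT
      rcases nbr_of_11 hadjT with h2 | h2
      · rw [h2] at hPT; exact absurd hPT (by decide)
      -- h2 : P[j+1] = (1,2)
      have hT3 : 2 ≤ j := by
        by_contra hlt
        have hje : j = 1 := by omega
        subst hje
        have h11 : P[1]'(by omega) = ((1,1):V) := hprev
        have hadj01 : LadderAdj 4 ((1,1):V) ((1,1):V) := by
          have h := hchainIdx 0 (by omega) (by omega)
          rw [hP0, h11] at h
          exact h
        rcases nbr_of_11 hadj01 with h3 | h3 <;> simp [Prod.ext_iff] at h3
      have hchd : List.Chain' (LadderAdj 4) (((1,2):V) :: P.drop (j+1+1)) := by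
        rw [← h2]; exact hchd0
      have hcovd' : ∀ i ∈ ({3,4,5,6,7} : Finset (Fin 8)),
          lvert i ∈ ((1,2):V) :: P.drop (j+1+1) := by
        intro i hi
        have hxDL : lvert i ∈ DL :=
          (by decide : ∀ m : Fin 8, m ∈ ({3,4,5,6,7} : Finset (Fin 8)) → lvert m ∈ DL) i hi
        by_cases hxe : lvert i = P[j+1]'hTlt
        · rw [hxe, h2]; exact List.mem_cons_self
        · exact List.mem_cons_of_mem _ (hcovd _ hxDL hxe)
      have hsb := suffix_bound (w1 k) gW hg0W (hstep1 k hk) (P.drop (j+1+1)) ((1,2):V)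
          ({3,4,5,6,7} : Finset (Fin 8)) hchd (by decide) hcovd'
      have hval : gW ((1,2):V) ({3,4,5,6,7} : Finset (Fin 8)) = 7 := by decide
      have hdcost : walkCost (w1 k) (P.drop (j+1)) =
          walkCost (w1 k) (((1,2):V) :: P.drop (j+1+1)) := by
        rw [hdrop, h2]
      omega
    · -- came from (2,1) : P[T] = (2,2)
      rw [hprev] at hadjT
      rcases nbr_of_21 hadjT with h2 | h2
      · rw [h2] at hPT; exact absurd hPT (by decide)
      -- h2 : P[j+1] = (2,2)
      have hchd : List.Chain' (LadderAdj 4) (((2,2):V) :: P.drop (j+1+1)) := by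
        rw [← h2]; exact hchd0
      have hcovd' : ∀ i ∈ ({2,4,5,6,7} : Finset (Fin 8)),
          lvert i ∈ ((2,2):V) :: P.drop (j+1+1) := by
        intro i hi
        have hxDL : lvert i ∈ DL :=
          (by decide : ∀ m : Fin 8, m ∈ ({2,4,5,6,7} : Finset (Fin 8)) → lvert m ∈ DL) i hi
        by_cases hxe : lvert i = P[j+1]'hTlt
        · rw [hxe, h2]; exact List.mem_cons_self
        · exact List.mem_cons_of_mem _ (hcovd _ hxDL hxe)
      have hsb := suffix_bound (w1 k) gW hg0W (hstep1 k hk) (P.drop (j+1+1)) ((2,2):V)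
          ({2,4,5,6,7} : Finset (Fin 8)) hchd (by decide) hcovd'
      have hval : gW ((2,2):V) ({2,4,5,6,7} : Finset (Fin 8)) = 9 := by decide
      have hdcost : walkCost (w1 k) (P.drop (j+1)) =
          walkCost (w1 k) (((2,2):V) :: P.drop (j+1+1)) := by
        rw [hdrop, h2]
      omega
end

section
/- Fix an integer k ≥ 5. There exists a constant α ≥ 0 such that for every n ≥ 1 there is a deterministic online strategy A_n for exploring the ladder grid G_{2,n} with the property: for every weighting w of G_{2,n} with weights in {1,k} that admits an exploration walk all of whose traversed edges have weight 1, cost(A_n(w)) ≤ 2·OPT(w) + α. -/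
instance (n : ℕ) (v : V) : Decidable (InLadder n v) := by unfold InLadder; infer_instance
instance (n : ℕ) (u v : V) : Decidable (LadderAdj n u v) := by unfold LadderAdj; infer_instance

lemma LadderAdj.symm {n : ℕ} {u v : V} (h : LadderAdj n u v) : LadderAdj n v u := by
  obtain ⟨h1, h2, h3⟩ := h; exact ⟨h2, h1, by tauto⟩

def nbrs (n : ℕ) (u : V) : List V :=
  [(u.1, u.2+1), (u.1, u.2-1), (3 - u.1, u.2)].filter (fun v => decide (LadderAdj n u v))

lemma mem_nbrs {n : ℕ} {u v : V} : v ∈ nbrs n u ↔ LadderAdj n u v := by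
  obtain ⟨a, b⟩ := u; obtain ⟨c, d⟩ := v
  simp only [nbrs, List.mem_filter, List.mem_cons, List.not_mem_nil, or_false,
    decide_eq_true_eq]
  constructor
  · rintro ⟨_, h⟩; exact h
  · intro h
    refine ⟨?_, h⟩
    obtain ⟨⟨hu1, hu2, hu3⟩, ⟨hv1, hv2, hv3⟩, hadj⟩ := h
    simp only [Prod.mk.injEq]
    simp only at hu1 hu2 hu3 hv1 hv2 hv3
    rcases hadj with ⟨h1, h2 | h2⟩ | ⟨h1, h2 | h2⟩ <;> simp only at h1 h2 <;> omega

def snakeAux : ℕ → ℕ → ℕ → List V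
  | 0, _, _ => []
  | m+1, j, r => (r, j) :: (3 - r, j) :: snakeAux m (j+1) (3-r)

def snakeList (n : ℕ) : List V := snakeAux n 1 1

lemma snakeAux_mem {m j r : ℕ} (hr : r = 1 ∨ r = 2) {v : V} (hv : v ∈ snakeAux m j r) :
    (v.1 = 1 ∨ v.1 = 2) ∧ j ≤ v.2 ∧ v.2 < j + m := by
  induction m generalizing j r with
  | zero => simp [snakeAux] at hv
  | succ m ih =>
    simp only [snakeAux, List.mem_cons] at hv
    rcases hv with rfl | rfl | hv
    · exact ⟨hr, le_refl _, by omega⟩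
    · exact ⟨by omega, le_refl _, by omega⟩
    · have := ih (r := 3 - r) (j := j+1) (by omega) hv
      exact ⟨this.1, by omega, by omega⟩

lemma snakeAux_mem_of {m j r : ℕ} (hr : r = 1 ∨ r = 2) {v : V}
    (h1 : v.1 = 1 ∨ v.1 = 2) (h2 : j ≤ v.2) (h3 : v.2 < j + m) : v ∈ snakeAux m j r := by
  induction m generalizing j r with
  | zero => omega
  | succ m ih =>
    simp only [snakeAux, List.mem_cons]
    by_cases hc : v.2 = j
    · have : v.1 = r ∨ v.1 = 3 - r := by omega
      rcases this with h | h
      · left; rw [Prod.ext_iff]; exact ⟨h, hc⟩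
      · right; left; rw [Prod.ext_iff]; exact ⟨h, hc⟩
    · right; right; exact ih (by omega) (by omega) (by omega)

lemma snakeAux_length (m j r : ℕ) : (snakeAux m j r).length = 2 * m := by
  induction m generalizing j r with
  | zero => simp [snakeAux]
  | succ m ih => simp [snakeAux, ih]; omega

lemma snakeAux_nodup {m j r : ℕ} (hr : r = 1 ∨ r = 2) : (snakeAux m j r).Nodup := by
  induction m generalizing j r with
  | zero => simp [snakeAux]
  | succ m ih =>
    simp only [snakeAux, List.nodup_cons, List.mem_cons]
    refine ⟨?_, ?_, ih (by omega)⟩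
    · rintro (h | h)
      · have : r = 3 - r := congrArg Prod.fst h; omega
      · have := snakeAux_mem (by omega : (3-r) = 1 ∨ (3-r) = 2) h
        simp only at this; omega
    · intro h
      have := snakeAux_mem (by omega : (3-r) = 1 ∨ (3-r) = 2) h
      simp only at this; omega

lemma snakeAux_chain {n m j r : ℕ} (hr : r = 1 ∨ r = 2) (hj : 1 ≤ j) (hjm : j + m ≤ n + 1) :
    List.Chain' (LadderAdj n) (snakeAux m j r) := by
  induction m generalizing j r with
  | zero => simp [snakeAux, List.Chain']
  | succ m ih =>
    have hin1 : InLadder n (r, j) := ⟨hr, hj, by omega⟩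
    have hin2 : InLadder n (3 - r, j) := ⟨by omega, hj, by omega⟩
    simp only [snakeAux]
    refine List.IsChain.cons_cons ⟨hin1, hin2, Or.inr ⟨rfl, by omega⟩⟩ ?_
    cases m with
    | zero => exact List.isChain_singleton _
    | succ m =>
      refine List.IsChain.cons_cons ?_ (ih (by omega) (by omega) (by omega))
      exact ⟨hin2, ⟨by omega, by omega, by omega⟩, Or.inl ⟨rfl, by omega⟩⟩

lemma mem_snakeList {n : ℕ} {v : V} : v ∈ snakeList n ↔ InLadder n v := by
  constructor
  · intro h
    have := snakeAux_mem (Or.inl rfl) h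
    exact ⟨this.1, this.2.1, by omega⟩
  · intro ⟨h1, h2, h3⟩
    exact snakeAux_mem_of (Or.inl rfl) h1 h2 (by omega)

lemma snakeList_chain (n : ℕ) : List.Chain' (LadderAdj n) (snakeList n) :=
  snakeAux_chain (Or.inl rfl) le_rfl (by omega)

lemma snakeList_length (n : ℕ) : (snakeList n).length = 2 * n := snakeAux_length n 1 1

lemma snakeList_nodup (n : ℕ) : (snakeList n).Nodup := snakeAux_nodup (Or.inl rfl)

lemma snakeList_head (n : ℕ) (hn : 1 ≤ n) : (snakeList n).head? = some ((1 : ℕ), (1 : ℕ)) := by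
  obtain ⟨m, rfl⟩ : ∃ m, n = m + 1 := ⟨n - 1, by omega⟩
  simp [snakeList, snakeAux]

structure MSt where
  hist : List V
  stk : List V
  rest : Option (List V)

def dfsCand (n : ℕ) (w : V → V → ℕ) (s : MSt) : Option V :=
  (nbrs n (s.hist.getLastD (1,1))).find? (fun v => decide (v ∉ s.hist ∧ w (s.hist.getLastD (1,1)) v = 1))

def stepSnake (n : ℕ) (s : MSt) : Option MSt :=
  if (snakeList n).all (fun v => decide (v ∈ s.hist)) then none
  else match (snakeList n).drop 1 with
    | [] => none
    | v :: r => some ⟨s.hist ++ [v], s.stk, some r⟩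

def stepPop (n : ℕ) (s : MSt) : Option MSt :=
  match s.stk with
  | _ :: b :: r => some ⟨s.hist ++ [b], b :: r, none⟩
  | _ => stepSnake n s

def stepDFS (n : ℕ) (w : V → V → ℕ) (s : MSt) : Option MSt :=
  match dfsCand n w s with
  | some v => some ⟨s.hist ++ [v], v :: s.stk, none⟩
  | none => stepPop n s

def stepF (n : ℕ) (w : V → V → ℕ) (s : MSt) : Option MSt :=
  match s.rest with
  | some [] => none
  | some (v :: r) => some ⟨s.hist ++ [v], s.stk, some r⟩
  | none => stepDFS n w s

def initSt : MSt := ⟨[(1,1)], [(1,1)], none⟩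

def runF (n : ℕ) (w : V → V → ℕ) : ℕ → MSt
  | 0 => initSt
  | m+1 => match stepF n w (runF n w m) with
    | none => runF n w m
    | some s' => s'

def AStrat (n : ℕ) (w : V → V → ℕ) : List V := (runF n w (6*n+6)).hist

lemma stepF_hist_snoc {n : ℕ} {w : V → V → ℕ} {s s' : MSt}
    (h : stepF n w s = some s') : ∃ v, s'.hist = s.hist ++ [v] := by
  unfold stepF stepDFS stepPop stepSnake at h
  repeat' split at h
  all_goals first
    | (cases h; exact ⟨_, rfl⟩)
    | simp at h

lemma hist_getLast?_some {s : MSt} (h : s.hist ≠ []) :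
    s.hist.getLast? = some (s.hist.getLastD (1,1)) := by
  rw [List.getLastD_eq_getLast?]
  cases hx : s.hist.getLast? with
  | none => exact absurd (List.getLast?_eq_none_iff.mp hx) h
  | some a => rfl

lemma chain'_snoc {R : V → V → Prop} {l : List V} {v : V} (hc : List.Chain' R l)
    (h : ∀ x ∈ l.getLast?, R x v) : List.Chain' R (l ++ [v]) :=
  List.isChain_append.mpr ⟨hc, List.isChain_singleton v, by
    intro x hx y hy
    simp only [List.head?_cons, Option.mem_def, Option.some.injEq] at hy
    subst hy; exact h x hx⟩

lemma dfsCand_some {n : ℕ} {w : V → V → ℕ} {s : MSt} {v : V} (h : dfsCand n w s = some v) :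
    LadderAdj n (s.hist.getLastD (1,1)) v ∧ v ∉ s.hist ∧ w (s.hist.getLastD (1,1)) v = 1 := by
  have hm := List.mem_of_find?_eq_some h
  have hp := List.find?_some h
  simp only [decide_eq_true_eq] at hp
  exact ⟨mem_nbrs.mp hm, hp.1, hp.2⟩

lemma dfsCand_none {n : ℕ} {w : V → V → ℕ} {s : MSt} (h : dfsCand n w s = none) :
    ∀ v, LadderAdj n (s.hist.getLastD (1,1)) v → w (s.hist.getLastD (1,1)) v = 1 →
      v ∈ s.hist := by
  intro v hadj hw
  have := List.find?_eq_none.mp h v (mem_nbrs.mpr hadj)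
  simp only [decide_eq_true_eq, not_and] at this
  by_contra hv
  exact (this hv) hw

def MInv (n : ℕ) (s : MSt) : Prop :=
  s.hist ≠ [] ∧ s.hist.head? = some (1,1) ∧ List.Chain' (LadderAdj n) s.hist ∧
  (∀ v ∈ s.hist, InLadder n v) ∧
  (match s.rest with
   | none => s.stk ≠ [] ∧ s.stk.getLast? = some ((1:ℕ),(1:ℕ)) ∧
       s.stk.head? = s.hist.getLast? ∧
       List.Chain' (LadderAdj n) s.stk ∧ (∀ v ∈ s.stk, v ∈ s.hist)
   | some r => List.Chain' (LadderAdj n) (s.hist.getLastD (1,1) :: r) ∧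
       (∀ v, InLadder n v → v ∈ s.hist ∨ v ∈ r))

lemma MInv_init (n : ℕ) (hn : 1 ≤ n) : MInv n initSt := by
  refine ⟨by simp [initSt], rfl, List.isChain_singleton _, ?_, ?_⟩
  · intro v hv
    simp only [initSt, List.mem_singleton] at hv
    subst hv; exact ⟨Or.inl rfl, le_rfl, hn⟩
  · exact ⟨by simp [initSt], rfl, rfl, List.isChain_singleton _, by simp [initSt]⟩

lemma MInv_step {n : ℕ} {w : V → V → ℕ} {s s' : MSt}
    (hI : MInv n s) (h : stepF n w s = some s') : MInv n s' := by
  obtain ⟨h1, h2, h3, h4, h5⟩ := hI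
  obtain ⟨u, hlast⟩ : ∃ u, s.hist.getLast? = some u := by
    cases hx : s.hist.getLast? with
    | none => exact absurd (List.getLast?_eq_none_iff.mp hx) h1
    | some a => exact ⟨a, rfl⟩
  have hud : s.hist.getLastD (1,1) = u := by rw [List.getLastD_eq_getLast?, hlast]; rfl
  have huin : u ∈ s.hist := List.mem_of_mem_getLast? hlast
  have hhead : ∀ v : V, (s.hist ++ [v]).head? = some (1,1) := fun v => by
    rw [List.head?_append_of_ne_nil _ h1]; exact h2
  have hne : ∀ v : V, (s.hist ++ [v] : List V) ≠ [] := fun v => by simp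
  have hgl : ∀ v : V, ((s.hist ++ [v]).getLastD (1,1)) = v := fun v => by
    rw [List.getLastD_eq_getLast?, List.getLast?_concat]; rfl
  have hchain : ∀ v : V, LadderAdj n u v → List.Chain' (LadderAdj n) (s.hist ++ [v]) := by
    intro v hadj
    refine chain'_snoc h3 ?_
    intro x hx
    rw [hlast] at hx; cases hx; exact hadj
  have hmem : ∀ v : V, ∀ x ∈ s.hist, x ∈ s.hist ++ [v] := by
    intro v x hx; exact List.mem_append_left _ hx
  have hin4 : ∀ v : V, LadderAdj n u v → ∀ x ∈ s.hist ++ [v], InLadder n x := by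
    intro v hadj x hx
    rcases List.mem_append.mp hx with hx | hx
    · exact h4 x hx
    · simp only [List.mem_singleton] at hx; subst hx; exact hadj.2.1
  cases hr : s.rest with
  | some r =>
    rw [hr] at h5
    cases r with
    | nil => simp [stepF, hr] at h
    | cons v r' =>
      simp only [stepF, hr, Option.some.injEq] at h
      subst h
      obtain ⟨hc5, hcov5⟩ := h5
      rw [hud] at hc5
      have hadj : LadderAdj n u v := (List.isChain_cons_cons.mp hc5).1
      refine ⟨hne v, hhead v, hchain v hadj, hin4 v hadj, ?_⟩
      simp only
      refine ⟨?_, ?_⟩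
      · rw [hgl v]
        exact (List.isChain_cons_cons.mp hc5).2
      · intro z hz
        rcases hcov5 z hz with hz' | hz'
        · exact Or.inl (hmem v z hz')
        · rcases List.mem_cons.mp hz' with rfl | hz''
          · exact Or.inl (by simp)
          · exact Or.inr hz''
  | none =>
    rw [hr] at h5
    obtain ⟨hs1, hs2, hs3, hs4, hs5⟩ := h5
    cases hf : dfsCand n w s with
    | some v =>
      simp only [stepF, stepDFS, hr, hf, Option.some.injEq] at h
      subst h
      obtain ⟨hadj, hvnew, hw1⟩ := dfsCand_some hf
      rw [hud] at hadj hw1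
      refine ⟨hne v, hhead v, hchain v hadj, hin4 v hadj, ?_⟩
      simp only
      refine ⟨by simp, ?_, ?_, ?_, ?_⟩
      · cases hstk : s.stk with
        | nil => exact absurd hstk hs1
        | cons b t =>
          rw [hstk] at hs2
          rw [List.getLast?_cons_cons]
          exact hs2
      · rw [List.getLast?_concat]; rfl
      · unfold List.Chain'; rw [List.isChain_cons]
        refine ⟨?_, hs4⟩
        intro y hy
        rw [hs3, hlast] at hy
        simp only [Option.mem_def, Option.some.injEq] at hy
        subst hy
        exact hadj.symm
      · intro z hz
        rcases List.mem_cons.mp hz with rfl | hz'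
        · simp
        · exact hmem v z (hs5 z hz')
    | none =>
      cases hstk : s.stk with
      | nil => exact absurd hstk hs1
      | cons a t =>
        rw [hstk] at hs2 hs3 hs4 hs5
        cases t with
        | cons b r =>
          simp only [stepF, stepDFS, stepPop, hr, hf, hstk, Option.some.injEq] at h
          subst h
          have hab : LadderAdj n a b := (List.isChain_cons_cons.mp hs4).1
          have hua : u = a := by
            simp only [List.head?_cons, hlast, Option.some.injEq] at hs3
            exact hs3.symm
          have hbh : b ∈ s.hist := hs5 b (by simp)
          refine ⟨hne b, hhead b, hchain b (hua ▸ hab), ?_, ?_⟩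
          · intro x hx
            rcases List.mem_append.mp hx with hx | hx
            · exact h4 x hx
            · simp only [List.mem_singleton] at hx; subst hx; exact h4 _ hbh
          · simp only
            refine ⟨by simp, ?_, ?_, (List.isChain_cons_cons.mp hs4).2, ?_⟩
            · rw [← hs2, List.getLast?_cons_cons]
            · rw [List.getLast?_concat]; rfl
            · intro z hz
              exact hmem b z (hs5 z (List.mem_cons_of_mem a hz))
        | nil =>
          have hua : u = ((1:ℕ),(1:ℕ)) := by
            simp only [List.getLast?_singleton, Option.some.injEq] at hs2
            simp only [List.head?_cons, hlast, Option.some.injEq] at hs3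
            rw [← hs3, hs2]
          by_cases hall : ((snakeList n).all fun v => decide (v ∈ s.hist)) = true
          · simp [stepF, stepDFS, stepPop, stepSnake, hr, hf, hstk, hall] at h
          · cases hd : (snakeList n).drop 1 with
            | nil =>
              simp [stepF, stepDFS, stepPop, stepSnake, hr, hf, hstk, hall, hd] at h
            | cons v r =>
              simp only [stepF, stepDFS, stepPop, stepSnake, hr, hf, hstk, hall,
                if_false, hd, Option.some.injEq, Bool.false_eq_true, if_false] at h
              subst h
              have hsnake : snakeList n = ((1:ℕ),(1:ℕ)) :: v :: r := by
                have hn1 : 1 ≤ n := by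
                  by_contra hn1
                  have : n = 0 := by omega
                  subst this
                  simp [snakeList, snakeAux] at hd
                have hh := snakeList_head n hn1
                have h11 : snakeList n = ((1:ℕ),(1:ℕ)) :: (snakeList n).tail := by
                  cases hsl : snakeList n with
                  | nil => rw [hsl] at hh; simp at hh
                  | cons x xs =>
                    rw [hsl] at hh; simp only [List.head?_cons, Option.some.injEq] at hh
                    rw [hh]; rfl
                rw [← List.drop_one] at h11
                rw [h11, hd]
              have hchainS : List.Chain' (LadderAdj n) (((1:ℕ),(1:ℕ)) :: v :: r) := by
                rw [← hsnake]; exact snakeList_chain n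
              have hadj : LadderAdj n u v := by rw [hua]; exact (List.isChain_cons_cons.mp hchainS).1
              refine ⟨hne v, hhead v, hchain v hadj, hin4 v hadj, ?_⟩
              simp only
              refine ⟨?_, ?_⟩
              · rw [hgl v]
                exact (List.isChain_cons_cons.mp hchainS).2
              · intro z hz
                have hzz : z ∈ snakeList n := mem_snakeList.mpr hz
                rw [hsnake] at hzz
                rcases List.mem_cons.mp hzz with rfl | hzz
                · exact Or.inl (hmem v _ (List.mem_of_mem_head? h2))
                · rcases List.mem_cons.mp hzz with rfl | hzz
                  · exact Or.inl (by simp)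
                  · exact Or.inr hzz

def phi (n : ℕ) (s : MSt) : ℕ :=
  Option.elim s.rest (2 * (2*n - s.hist.toFinset.card) + s.stk.length + 2*n)
    (fun r => r.length)

lemma card_le_two_n {n : ℕ} {l : List V} (h4 : ∀ v ∈ l, InLadder n v) :
    l.toFinset.card ≤ 2*n := by
  have hsub : l.toFinset ⊆ (snakeList n).toFinset := by
    intro x hx
    rw [List.mem_toFinset] at hx ⊢
    exact mem_snakeList.mpr (h4 x hx)
  calc l.toFinset.card ≤ (snakeList n).toFinset.card := Finset.card_le_card hsub
    _ = (snakeList n).length := List.toFinset_card_of_nodup (snakeList_nodup n)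
    _ = 2*n := snakeList_length n

lemma toFinset_snoc_new {l : List V} {v : V} (hv : v ∉ l) :
    (l ++ [v]).toFinset.card = l.toFinset.card + 1 := by
  rw [List.toFinset_append]
  have : l.toFinset ∪ ([v] : List V).toFinset = insert v l.toFinset := by
    ext x; simp [or_comm]
  rw [this, Finset.card_insert_of_notMem (by simpa using hv)]

lemma toFinset_snoc_old {l : List V} {v : V} (hv : v ∈ l) :
    (l ++ [v]).toFinset = l.toFinset := by
  ext x
  simp only [List.mem_toFinset, List.mem_append, List.mem_singleton]
  constructor
  · rintro (h | rfl)
    · exact h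
    · exact hv
  · exact Or.inl

lemma phi_step_lt {n : ℕ} {w : V → V → ℕ} {s s' : MSt}
    (hI : MInv n s) (h : stepF n w s = some s') : phi n s' < phi n s := by
  obtain ⟨h1, h2, h3, h4, h5⟩ := hI
  have hcard := card_le_two_n h4
  cases hr : s.rest with
  | some r =>
    rw [hr] at h5
    cases r with
    | nil => simp [stepF, hr] at h
    | cons v r' =>
      simp only [stepF, hr, Option.some.injEq] at h
      subst h
      simp [phi, hr]
  | none =>
    rw [hr] at h5
    obtain ⟨hs1, hs2, hs3, hs4, hs5⟩ := h5
    cases hf : dfsCand n w s with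
    | some v =>
      simp only [stepF, stepDFS, hr, hf, Option.some.injEq] at h
      subst h
      obtain ⟨hadj, hvnew, hw1⟩ := dfsCand_some hf
      have hnew := toFinset_snoc_new hvnew
      have hcard' : (s.hist ++ [v]).toFinset.card ≤ 2*n := by
        refine card_le_two_n ?_
        intro x hx
        rcases List.mem_append.mp hx with hx | hx
        · exact h4 x hx
        · simp only [List.mem_singleton] at hx; subst hx; exact hadj.2.1
      simp only [phi, hr, Option.elim, List.length_cons]
      omega
    | none =>
      cases hstk : s.stk with
      | nil => exact absurd hstk hs1
      | cons a t =>
        rw [hstk] at hs5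
        cases t with
        | cons b r =>
          simp only [stepF, stepDFS, stepPop, hr, hf, hstk, Option.some.injEq] at h
          subst h
          have hbh : b ∈ s.hist := hs5 b (by simp)
          have hold := toFinset_snoc_old hbh
          simp only [phi, hr, hstk, Option.elim, List.length_cons, hold]
          omega
        | nil =>
          by_cases hall : ((snakeList n).all fun v => decide (v ∈ s.hist)) = true
          · simp [stepF, stepDFS, stepPop, stepSnake, hr, hf, hstk, hall] at h
          · cases hd : (snakeList n).drop 1 with
            | nil =>
              simp [stepF, stepDFS, stepPop, stepSnake, hr, hf, hstk, hall, hd] at h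
            | cons v r =>
              simp only [stepF, stepDFS, stepPop, stepSnake, hr, hf, hstk, hall,
                if_false, hd, Option.some.injEq, Bool.false_eq_true] at h
              subst h
              have hlen : (v :: r).length = 2*n - 1 := by
                rw [← hd, List.length_drop, snakeList_length]
              simp only [phi, hr, hstk, Option.elim, List.length_cons] at *
              omega

lemma MInv_run {n : ℕ} (w : V → V → ℕ) (hn : 1 ≤ n) : ∀ m, MInv n (runF n w m) := by
  intro m
  induction m with
  | zero => exact MInv_init n hn
  | succ m ih =>
    show MInv n (runF n w (m+1))
    unfold runF
    cases hs : stepF n w (runF n w m) with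
    | none => exact ih
    | some s' => exact MInv_step ih hs

lemma runF_succ (n : ℕ) (w : V → V → ℕ) (m : ℕ) :
    runF n w (m+1) = (match stepF n w (runF n w m) with
      | none => runF n w m
      | some s' => s') := rfl

lemma runF_succ_none {n : ℕ} {w : V → V → ℕ} {m : ℕ}
    (h : stepF n w (runF n w m) = none) : runF n w (m+1) = runF n w m := by
  rw [runF_succ, h]

lemma runF_succ_some {n : ℕ} {w : V → V → ℕ} {m : ℕ} {s' : MSt}
    (h : stepF n w (runF n w m) = some s') : runF n w (m+1) = s' := by
  rw [runF_succ, h]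

lemma runF_frozen {n : ℕ} {w : V → V → ℕ} {m : ℕ}
    (h : stepF n w (runF n w m) = none) : ∀ j, runF n w (m + j) = runF n w m := by
  intro j
  induction j with
  | zero => rfl
  | succ j ih =>
    have he : m + (j+1) = (m + j) + 1 := rfl
    rw [he, runF_succ, ih, h]

lemma terminate_aux {n : ℕ} (w : V → V → ℕ) (hn : 1 ≤ n) (m : ℕ) :
    stepF n w (runF n w m) = none ∨ phi n (runF n w m) + m ≤ phi n initSt := by
  induction m with
  | zero => right; rw [show runF n w 0 = initSt from rfl]; omega
  | succ m ih =>
    cases hs : stepF n w (runF n w m) with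
    | none =>
      left; rw [runF_succ_none hs]; exact hs
    | some s' =>
      rcases ih with ih | ih
      · rw [ih] at hs; cases hs
      · cases hs2 : stepF n w (runF n w (m+1)) with
        | none => exact Or.inl rfl
        | some s'' =>
          right
          have hlt := phi_step_lt (MInv_run w hn m) hs
          rw [runF_succ_some hs]
          omega

lemma phi_init (n : ℕ) : phi n initSt = 2 * (2*n - 1) + 1 + 2*n := by
  simp [phi, initSt]

lemma stepF_end {n : ℕ} (w : V → V → ℕ) (hn : 1 ≤ n) :
    stepF n w (runF n w (6*n+6)) = none := by
  rcases terminate_aux w hn (6*n+6) with h | h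
  · exact h
  · rw [phi_init] at h
    omega

lemma runF_stable {n : ℕ} (w : V → V → ℕ) (hn : 1 ≤ n) {m : ℕ} (hm : 6*n+6 ≤ m) :
    runF n w m = runF n w (6*n+6) := by
  obtain ⟨j, rfl⟩ : ∃ j, m = (6*n+6) + j := ⟨m - (6*n+6), by omega⟩
  exact runF_frozen (stepF_end w hn) j

lemma hist_prefix_succ {n : ℕ} (w : V → V → ℕ) (m : ℕ) :
    (runF n w m).hist <+: (runF n w (m+1)).hist := by
  cases hs : stepF n w (runF n w m) with
  | none => rw [runF_succ_none hs]
  | some s' =>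
    rw [runF_succ_some hs]
    obtain ⟨v, hv⟩ := stepF_hist_snoc hs
    rw [hv]
    exact ⟨[v], rfl⟩

lemma hist_prefix {n : ℕ} (w : V → V → ℕ) {m m' : ℕ} (h : m ≤ m') :
    (runF n w m).hist <+: (runF n w m').hist := by
  induction m' with
  | zero => cases Nat.le_zero.mp h; exact List.prefix_refl _
  | succ m' ih =>
    rcases Nat.lt_or_ge m (m'+1) with hlt | hge
    · exact (ih (by omega)).trans (hist_prefix_succ w m')
    · cases (by omega : m = m' + 1); exact List.prefix_refl _

lemma hist_len_le {n : ℕ} (w : V → V → ℕ) (m : ℕ) :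
    (runF n w m).hist.length ≤ m + 1 := by
  induction m with
  | zero => simp [runF, initSt]
  | succ m ih =>
    cases hs : stepF n w (runF n w m) with
    | none => rw [runF_succ_none hs]; omega
    | some s' =>
      rw [runF_succ_some hs]
      obtain ⟨v, hv⟩ := stepF_hist_snoc hs
      rw [hv, List.length_append]
      simp; omega

lemma hist_len_eq_or_none {n : ℕ} (w : V → V → ℕ) (m : ℕ) :
    (runF n w m).hist.length = m + 1 ∨ stepF n w (runF n w m) = none := by
  induction m with
  | zero => left; simp [runF, initSt]
  | succ m ih =>
    cases hs : stepF n w (runF n w m) with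
    | none =>
      right; rw [runF_succ_none hs]; exact hs
    | some s' =>
      rcases ih with ih | ih
      · left
        rw [runF_succ_some hs]
        obtain ⟨v, hv⟩ := stepF_hist_snoc hs
        rw [hv, List.length_append, ih]
        simp
      · rw [ih] at hs; cases hs

lemma coverage_of_none {n : ℕ} {w : V → V → ℕ} {s : MSt} (hI : MInv n s) (hn : 1 ≤ n)
    (h : stepF n w s = none) : ∀ v, InLadder n v → v ∈ s.hist := by
  obtain ⟨h1, h2, h3, h4, h5⟩ := hI
  cases hr : s.rest with
  | some r =>
    rw [hr] at h5
    cases r with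
    | nil => intro v hv; rcases h5.2 v hv with hh | hh
             · exact hh
             · simp at hh
    | cons v r' => simp [stepF, hr] at h
  | none =>
    rw [hr] at h5
    obtain ⟨hs1, hs2, hs3, hs4, hs5⟩ := h5
    cases hf : dfsCand n w s with
    | some v => simp [stepF, stepDFS, hr, hf] at h
    | none =>
      cases hstk : s.stk with
      | nil => exact absurd hstk hs1
      | cons a t =>
        cases t with
        | cons b r => simp [stepF, stepDFS, stepPop, hr, hf, hstk] at h
        | nil =>
          by_cases hall : ((snakeList n).all fun v => decide (v ∈ s.hist)) = true
          · intro v hv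
            have := List.all_eq_true.mp hall v (mem_snakeList.mpr hv)
            simpa using this
          · cases hd : (snakeList n).drop 1 with
            | nil =>
              exfalso
              have := List.length_drop (i := 1) (l := snakeList n)
              rw [hd, snakeList_length] at this
              simp at this
              omega
            | cons v r =>
              simp [stepF, stepDFS, stepPop, stepSnake, hr, hf, hstk, hall, hd] at h

lemma AStrat_explores {n : ℕ} (w : V → V → ℕ) (hn : 1 ≤ n) :
    IsExploration n (AStrat n w) := by
  have hI := MInv_run w hn (6*n+6)
  exact ⟨⟨hI.2.1, hI.2.2.1⟩, coverage_of_none hI hn (stepF_end w hn)⟩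

lemma find?_congr {p q : V → Bool} : ∀ l : List V, (∀ x ∈ l, p x = q x) →
    l.find? p = l.find? q := by
  intro l h
  induction l with
  | nil => rfl
  | cons a t ih =>
    rw [List.find?_cons, List.find?_cons, h a (by simp)]
    cases q a with
    | false => exact ih (fun x hx => h x (by simp [hx]))
    | true => rfl

lemma stepF_local {n : ℕ} {w w' : V → V → ℕ} {s : MSt} (hne : s.hist ≠ [])
    (hag : ∀ u v, LadderAdj n u v → u ∈ s.hist → w u v = w' u v) :
    stepF n w s = stepF n w' s := by
  have hu : s.hist.getLastD (1,1) ∈ s.hist :=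
    List.mem_of_mem_getLast? (hist_getLast?_some hne)
  have hc : dfsCand n w s = dfsCand n w' s := by
    unfold dfsCand
    refine find?_congr _ ?_
    intro x hx
    have hadj := mem_nbrs.mp hx
    rw [hag _ x hadj hu]
  unfold stepF stepDFS
  rw [hc]

lemma hist_prefix_A {n : ℕ} (w : V → V → ℕ) (hn : 1 ≤ n) (m : ℕ) :
    (runF n w m).hist <+: AStrat n w := by
  rcases le_or_gt m (6*n+6) with hm | hm
  · exact hist_prefix w hm
  · rw [AStrat, ← runF_stable w hn (le_of_lt hm)]

lemma run_agree {n : ℕ} {w w' : V → V → ℕ} (hn : 1 ≤ n) (t : ℕ)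
    (hag : ∀ u v, LadderAdj n u v →
      (u ∈ (AStrat n w).take (t + 1) ∨ v ∈ (AStrat n w).take (t + 1)) → w u v = w' u v) :
    ∀ m, m ≤ t + 1 → runF n w m = runF n w' m := by
  intro m hm
  induction m with
  | zero => rfl
  | succ m ih =>
    have hEq := ih (by omega)
    have hsub : ∀ x ∈ (runF n w m).hist, x ∈ (AStrat n w).take (t+1) := by
      intro x hx
      have hpre : (runF n w m).hist <+: (AStrat n w).take (t+1) := by
        rw [List.prefix_take_iff]
        refine ⟨hist_prefix_A w hn m, ?_⟩
        calc (runF n w m).hist.length ≤ m + 1 := hist_len_le w m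
          _ ≤ t + 1 := by omega
      exact hpre.subset hx
    have hst : stepF n w (runF n w m) = stepF n w' (runF n w m) := by
      refine stepF_local (MInv_run w hn m).1 ?_
      intro u v hadj hu
      exact hag u v hadj (Or.inl (hsub u hu))
    rw [runF_succ, runF_succ, ← hEq, ← hst]

lemma take_stable {n : ℕ} (w : V → V → ℕ) (t : ℕ) :
    ∀ j, t + 1 ≤ j → (runF n w j).hist.take (t+2) = (runF n w (t+1)).hist.take (t+2) := by
  intro j hj
  obtain ⟨i, rfl⟩ : ∃ i, j = (t+1) + i := ⟨j - (t+1), by omega⟩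
  clear hj
  induction i with
  | zero => rfl
  | succ i ih =>
    have he : (t+1) + (i+1) = ((t+1)+i) + 1 := rfl
    rw [he]
    cases hs : stepF n w (runF n w ((t+1)+i)) with
    | none => rw [runF_succ_none hs]; exact ih
    | some s' =>
      rcases hist_len_eq_or_none (n := n) w ((t+1)+i) with hlen | hnone
      · rw [runF_succ_some hs]
        obtain ⟨v, hv⟩ := stepF_hist_snoc hs
        rw [hv, List.take_append_of_le_length (by omega)]
        exact ih
      · rw [hnone] at hs; cases hs

lemma AStrat_consistent {n : ℕ} {w w' : V → V → ℕ} (hn : 1 ≤ n) (t : ℕ)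
    (hag : ∀ u v, LadderAdj n u v →
      (u ∈ (AStrat n w).take (t + 1) ∨ v ∈ (AStrat n w).take (t + 1)) → w u v = w' u v) :
    (AStrat n w).take (t + 2) = (AStrat n w').take (t + 2) := by
  have hrun := run_agree hn t hag (t+1) le_rfl
  rcases le_or_gt (t+1) (6*n+6) with hN | hN
  · rw [AStrat, AStrat, take_stable w t _ hN, take_stable w' t _ hN, hrun]
  · rw [AStrat, AStrat, ← runF_stable w hn (by omega : 6*n+6 ≤ t+1),
      ← runF_stable w' hn (by omega : 6*n+6 ≤ t+1), hrun]

lemma zip_tail_iff_chain' {T : V → V → Prop} : ∀ p : List V,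
    ((∀ e ∈ p.zip p.tail, T e.1 e.2) ↔ List.Chain' T p) := by
  intro p
  induction p with
  | nil => simp [List.Chain']
  | cons a l ih =>
    cases l with
    | nil => simp [List.Chain']
    | cons b l' =>
      unfold List.Chain' at ih ⊢; rw [List.isChain_cons_cons, ← ih]
      constructor
      · intro h
        refine ⟨h (a, b) (by simp), ?_⟩
        intro e he
        refine h e ?_
        simp only [List.tail_cons, List.zip_cons_cons, List.mem_cons]
        right
        simpa using he
      · rintro ⟨h1, h2⟩ e he
        simp only [List.tail_cons, List.zip_cons_cons, List.mem_cons] at he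
        rcases he with rfl | he
        · exact h1
        · exact h2 e (by simpa using he)

lemma chain'_and {S T : V → V → Prop} : ∀ {p : List V}, List.Chain' S p →
    List.Chain' T p → List.Chain' (fun a b => S a b ∧ T a b) p := by
  intro p
  induction p with
  | nil => intros; simp [List.Chain']
  | cons a l ih =>
    cases l with
    | nil => intros; simp [List.Chain']
    | cons b l' =>
      intro hS hT
      unfold List.Chain' at *; rw [List.isChain_cons_cons] at *
      exact ⟨⟨hS.1, hT.1⟩, ih hS.2 hT.2⟩

lemma sum_ge_length {l : List ℕ} (h : ∀ x ∈ l, 1 ≤ x) : l.length ≤ l.sum := by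
  induction l with
  | nil => simp
  | cons a t ih =>
    simp only [List.length_cons, List.sum_cons]
    have := h a (by simp)
    have := ih (fun x hx => h x (by simp [hx]))
    omega

lemma zip_length_eq (p : List V) : (p.zip p.tail).length = p.length - 1 := by
  rw [List.length_zip, List.length_tail]
  omega

lemma walkCost_eq_length {w : V → V → ℕ} {p : List V}
    (h : ∀ e ∈ p.zip p.tail, w e.1 e.2 = 1) : walkCost w p = p.length - 1 := by
  unfold walkCost
  have : ((p.zip p.tail).map fun e => w e.1 e.2) = (p.zip p.tail).map fun _ => 1 :=
    List.map_congr_left h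
  rw [this, List.map_const', List.sum_replicate, zip_length_eq]
  simp

lemma walkCost_ge {w : V → V → ℕ} {p : List V}
    (h : ∀ e ∈ p.zip p.tail, 1 ≤ w e.1 e.2) : p.length - 1 ≤ walkCost w p := by
  unfold walkCost
  rw [← zip_length_eq p]
  have hlen : (p.zip p.tail).length = ((p.zip p.tail).map fun e => w e.1 e.2).length := by
    simp
  rw [hlen]
  refine sum_ge_length ?_
  intro x hx
  obtain ⟨e, he, rfl⟩ := List.mem_map.mp hx
  exact h e he

lemma OPT_lb {n k : ℕ} {w : V → V → ℕ} (hk : 5 ≤ k) (hw : IsWeighting n k w)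
    {p₀ : List V} (hp₀ : IsExploration n p₀) : 2*n - 1 ≤ OPT n w := by
  have hne : {c | ∃ p, IsExploration n p ∧ walkCost w p = c}.Nonempty :=
    ⟨walkCost w p₀, p₀, hp₀, rfl⟩
  have hmem := Nat.sInf_mem hne
  obtain ⟨q, hq, hqc⟩ := hmem
  rw [OPT, ← hqc]
  have hlen : 2*n ≤ q.length := by
    have hsub : (snakeList n).toFinset ⊆ q.toFinset := by
      intro x hx
      rw [List.mem_toFinset] at hx ⊢
      exact hq.2 x (mem_snakeList.mp hx)
    calc 2*n = (snakeList n).length := (snakeList_length n).symm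
      _ = (snakeList n).toFinset.card := (List.toFinset_card_of_nodup (snakeList_nodup n)).symm
      _ ≤ q.toFinset.card := Finset.card_le_card hsub
      _ ≤ q.length := q.toFinset_card_le
  have hcost : q.length - 1 ≤ walkCost w q := by
    refine walkCost_ge ?_
    intro e he
    have hadj : LadderAdj n e.1 e.2 := by
      have := (zip_tail_iff_chain' (T := LadderAdj n) q).mpr hq.1.2
      exact this e he
    rcases hw.2 e.1 e.2 hadj with h1 | h1 <;> omega
  omega

def CInv (n : ℕ) (w : V → V → ℕ) (s : MSt) : Prop :=
  s.rest = none ∧ List.Chain' (fun a b => w a b = 1) s.hist ∧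
  List.Chain' (fun a b => w a b = 1) s.stk ∧
  (∀ x ∈ s.hist, x ∉ s.stk → ∀ v, LadderAdj n x v → w x v = 1 → v ∈ s.hist) ∧
  s.hist.length + s.stk.length ≤ 2 * s.hist.toFinset.card

lemma CInv_init (n : ℕ) (w : V → V → ℕ) : CInv n w initSt := by
  refine ⟨rfl, List.isChain_singleton _, List.isChain_singleton _, ?_, ?_⟩
  · intro x hx hx2
    simp only [initSt, List.mem_singleton] at hx hx2
    exact absurd hx hx2
  · simp [initSt]

lemma closed_walk_mem {n : ℕ} {w : V → V → ℕ} {hist : List V}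
    (hcl : ∀ x ∈ hist, ∀ v, LadderAdj n x v → w x v = 1 → v ∈ hist) :
    ∀ p : List V, List.Chain' (fun a b => LadderAdj n a b ∧ w a b = 1) p →
      ∀ x, p.head? = some x → x ∈ hist → ∀ y ∈ p, y ∈ hist := by
  intro p
  induction p with
  | nil => intro _ x _ _ y hy; simp at hy
  | cons a q ih =>
    intro hch x hx hxh y hy
    simp only [List.head?_cons, Option.some.injEq] at hx
    subst hx
    rcases List.mem_cons.mp hy with rfl | hy
    · exact hxh
    · cases q with
      | nil => simp at hy
      | cons b q' =>
        unfold List.Chain' at hch; rw [List.isChain_cons_cons] at hch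
        have hbh : b ∈ hist := hcl a hxh b hch.1.1 hch.1.2
        exact ih hch.2 b rfl hbh y hy

lemma CInv_step {n : ℕ} {w : V → V → ℕ} {s s' : MSt}
    (hsym : ∀ u v, w u v = w v u)
    (hreach : ∃ p : List V, p.head? = some (1,1) ∧
      List.Chain' (fun a b => LadderAdj n a b ∧ w a b = 1) p ∧
      ∀ v, InLadder n v → v ∈ p)
    (hI : MInv n s) (hC : CInv n w s) (h : stepF n w s = some s') : CInv n w s' := by
  obtain ⟨h1, h2, h3, h4, h5⟩ := hI
  obtain ⟨c1, c2, c3, c4, c5⟩ := hC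
  rw [c1] at h5
  obtain ⟨hs1, hs2, hs3, hs4, hs5⟩ := h5
  obtain ⟨u, hlast⟩ : ∃ u, s.hist.getLast? = some u := by
    cases hx : s.hist.getLast? with
    | none => exact absurd (List.getLast?_eq_none_iff.mp hx) h1
    | some a => exact ⟨a, rfl⟩
  have hud : s.hist.getLastD (1,1) = u := by rw [List.getLastD_eq_getLast?, hlast]; rfl
  cases hf : dfsCand n w s with
  | some v =>
    simp only [stepF, stepDFS, c1, hf, Option.some.injEq] at h
    subst h
    obtain ⟨hadj, hvnew, hw1⟩ := dfsCand_some hf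
    rw [hud] at hadj hw1
    refine ⟨rfl, ?_, ?_, ?_, ?_⟩
    · refine chain'_snoc c2 ?_
      intro x hx
      rw [hlast] at hx
      simp only [Option.mem_def, Option.some.injEq] at hx
      subst hx
      exact hw1
    · unfold List.Chain'; rw [List.isChain_cons]
      refine ⟨?_, c3⟩
      intro y hy
      rw [hs3, hlast] at hy
      simp only [Option.mem_def, Option.some.injEq] at hy
      subst hy
      rw [hsym]
      exact hw1
    · intro x hx hxs z hadjz hwz
      have hxv : x ≠ v := by
        intro hxv; subst hxv
        exact hxs (by simp)
      have hxh : x ∈ s.hist := by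
        rcases List.mem_append.mp hx with hx | hx
        · exact hx
        · simp only [List.mem_singleton] at hx; exact absurd hx hxv
      have hxs' : x ∉ s.stk := fun hc => hxs (by simp [hc])
      exact List.mem_append_left _ (c4 x hxh hxs' z hadjz hwz)
    · rw [toFinset_snoc_new hvnew]
      simp only [List.length_append, List.length_cons, List.length_nil,
        List.length_singleton]
      omega
  | none =>
    cases hstk : s.stk with
    | nil => exact absurd hstk hs1
    | cons a t =>
      have hua : u = a := by
        rw [hstk] at hs3
        simp only [List.head?_cons, hlast, Option.some.injEq] at hs3
        exact hs3.symm
      cases t with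
      | cons b r =>
        simp only [stepF, stepDFS, stepPop, c1, hf, hstk, Option.some.injEq] at h
        subst h
        rw [hstk] at hs4 hs5 c3 c5
        have hbh : b ∈ s.hist := hs5 b (by simp)
        have hwab : w a b = 1 := (List.isChain_cons_cons.mp c3).1
        refine ⟨rfl, ?_, (List.isChain_cons_cons.mp c3).2, ?_, ?_⟩
        · refine chain'_snoc c2 ?_
          intro x hx
          rw [hlast] at hx
          simp only [Option.mem_def, Option.some.injEq] at hx
          subst hx
          rw [hua]
          exact hwab
        · intro x hx hxs z hadjz hwz
          have hxh : x ∈ s.hist := by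
            rcases List.mem_append.mp hx with hx | hx
            · exact hx
            · simp only [List.mem_singleton] at hx; subst hx; exact hbh
          by_cases hxa : x = a
          · subst hxa
            have := dfsCand_none hf z (by rw [hud, hua]; exact hadjz) (by rw [hud, hua]; exact hwz)
            exact List.mem_append_left _ this
          · have hxs' : x ∉ s.stk := by
              rw [hstk]
              intro hc
              rcases List.mem_cons.mp hc with rfl | hc
              · exact hxa rfl
              · exact hxs hc
            exact List.mem_append_left _ (c4 x hxh hxs' z hadjz hwz)
        · rw [toFinset_snoc_old hbh]
          simp only [List.length_append, List.length_cons, List.length_nil,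
            List.length_singleton] at *
          omega
      | nil =>
        exfalso
        have hcl2 : ∀ x ∈ s.hist, ∀ v, LadderAdj n x v → w x v = 1 → v ∈ s.hist := by
          intro x hx z hadjz hwz
          by_cases hxa : x = a
          · subst hxa
            exact dfsCand_none hf z (by rw [hud, hua]; exact hadjz) (by rw [hud, hua]; exact hwz)
          · refine c4 x hx ?_ z hadjz hwz
            rw [hstk]
            simp only [List.mem_singleton]
            exact hxa
        obtain ⟨p, hph, hpc, hpall⟩ := hreach
        have h11 : ((1:ℕ),(1:ℕ)) ∈ s.hist := List.mem_of_mem_head? h2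
        have hall : ((snakeList n).all fun v => decide (v ∈ s.hist)) = true := by
          rw [List.all_eq_true]
          intro v hv
          have hvh := closed_walk_mem hcl2 p hpc _ hph h11 v (hpall v (mem_snakeList.mp hv))
          simpa using hvh
        simp [stepF, stepDFS, stepPop, stepSnake, c1, hf, hstk, hall] at h

lemma CInv_run {n : ℕ} {w : V → V → ℕ} (hn : 1 ≤ n)
    (hsym : ∀ u v, w u v = w v u)
    (hreach : ∃ p : List V, p.head? = some (1,1) ∧
      List.Chain' (fun a b => LadderAdj n a b ∧ w a b = 1) p ∧
      ∀ v, InLadder n v → v ∈ p) :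
    ∀ m, CInv n w (runF n w m) := by
  intro m
  induction m with
  | zero => exact CInv_init n w
  | succ m ih =>
    cases hs : stepF n w (runF n w m) with
    | none => rw [runF_succ_none hs]; exact ih
    | some s' =>
      rw [runF_succ_some hs]
      exact CInv_step hsym hreach (MInv_run w hn m) ih hs

lemma AStrat_cost {n k : ℕ} {w : V → V → ℕ} (hn : 1 ≤ n) (hk : 5 ≤ k)
    (hw : IsWeighting n k w)
    (hex : ∃ p, IsExploration n p ∧ ∀ e ∈ p.zip p.tail, w e.1 e.2 = 1) :
    walkCost w (AStrat n w) ≤ 2 * OPT n w := by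
  obtain ⟨p, hpe, hpch⟩ := hex
  have hreach : ∃ q : List V, q.head? = some (1,1) ∧
      List.Chain' (fun a b => LadderAdj n a b ∧ w a b = 1) q ∧
      ∀ v, InLadder n v → v ∈ q :=
    ⟨p, hpe.1.1, chain'_and hpe.1.2 ((zip_tail_iff_chain' p).mp hpch), hpe.2⟩
  have hI := MInv_run w hn (6*n+6)
  have hC := CInv_run hn hw.1 hreach (6*n+6)
  obtain ⟨h1, h2, h3, h4, h5⟩ := hI
  obtain ⟨c1, c2, c3, c4, c5⟩ := hC
  rw [c1] at h5
  set s := runF n w (6*n+6) with hs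
  have hcost : walkCost w s.hist = s.hist.length - 1 := by
    refine walkCost_eq_length ?_
    intro e he
    exact (zip_tail_iff_chain' s.hist).mpr c2 e he
  have hcard : s.hist.toFinset.card ≤ 2*n := card_le_two_n h4
  have hstk1 : 1 ≤ s.stk.length := List.length_pos_iff.mpr h5.1
  have hOPT := OPT_lb hk hw hpe
  rw [AStrat, ← hs, hcost]
  omega


/-- On instances admitting an exploration walk using only weight-1 edges, there
is a deterministic online strategy that is 2-competitive. -/
theorem ladder_two_competitive_on_cheap_instances (k : ℕ) (hk : 5 ≤ k) :
    ∃ α : ℕ, ∀ n : ℕ, 1 ≤ n →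
      ∃ A : (V → V → ℕ) → List V, OnlineStrategy n k A ∧
        ∀ w, IsWeighting n k w →
          (∃ p, IsExploration n p ∧ ∀ e ∈ p.zip p.tail, w e.1 e.2 = 1) →
          walkCost w (A w) ≤ 2 * OPT n w + α := by
  refine ⟨0, fun n hn => ⟨AStrat n, ⟨fun w _ => AStrat_explores w hn,
    fun w w' _ _ t hag => AStrat_consistent hn t hag⟩, fun w hw hex => ?_⟩⟩
  simpa using AStrat_cost hn hk hw hex
end
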